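/- arXiv:1512.08608 — 5 statements merged into one kernel-verified Lean document; each statement's English description precedes it below -/
import Mathlib

section
/- Let γ ∈ (-3,1] and β > 3 + max{0,γ}. Then the double integral ∫_{ℝ³}∫_{ℝ³} (1+|v|²)^{-β/2} (1+|u|²)^{-β/2} |v−u|^γ du dv is finite. -/
open MeasureTheory Real Set Metric

noncomputable section

abbrev R3 : Type := EuclideanSpace ℝ (Fin 3)

lemma singular_integrableOn {γ : ℝ} (h1 : -3 < γ) (h2 : γ < 0) :
    IntegrableOn (fun x : R3 => ‖x‖ ^ γ) (closedBall 0 1) volume := by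
  have hγne : γ ≠ 0 := h2.ne
  have hmeas : Measurable (fun x : R3 => ‖x‖ ^ γ) := measurable_norm.pow_const γ
  refine ⟨hmeas.aestronglyMeasurable, ?_⟩
  have hnn : 0 ≤ᵐ[volume.restrict (closedBall (0:R3) 1)] fun x : R3 => ‖x‖ ^ γ :=
    Filter.Eventually.of_forall fun x => rpow_nonneg (norm_nonneg x) γ
  rw [hasFiniteIntegral_iff_ofReal hnn]
  rw [lintegral_eq_lintegral_meas_lt _ hnn hmeas.aemeasurable]
  set μR := volume.restrict (closedBall (0:R3) 1) with hμR
  have hB : volume (closedBall (0:R3) 1) < ⊤ := measure_closedBall_lt_top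
  have hVb : volume (ball (0:R3) 1) < ⊤ := measure_ball_lt_top
  -- bound the tail measure by the volume of a small ball
  have hball : ∀ t : ℝ, 0 < t →
      μR {a : R3 | t < ‖a‖ ^ γ} ≤ ENNReal.ofReal (t ^ (3 / γ)) * volume (ball (0:R3) 1) := by
    intro t ht
    have hsub : {a : R3 | t < ‖a‖ ^ γ} ⊆ ball (0:R3) (t ^ (1 / γ)) := by
      intro a ha
      have hna : 0 < ‖a‖ := by
        rcases eq_or_lt_of_le (norm_nonneg a) with h | h
        · exfalso
          simp only [mem_setOf_eq, ← h, zero_rpow hγne] at ha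
          exact absurd ha (not_lt.2 ht.le)
        · exact h
      have h1γ : (1 / γ) < 0 := by
        apply div_neg_of_pos_of_neg one_pos h2
      have := Real.rpow_lt_rpow_of_neg ht ha h1γ
      rw [← Real.rpow_mul (norm_nonneg a)] at this
      rw [mul_one_div_cancel hγne, Real.rpow_one] at this
      rw [mem_ball_zero_iff]
      exact this
    calc μR {a : R3 | t < ‖a‖ ^ γ} ≤ volume {a : R3 | t < ‖a‖ ^ γ} :=
          Measure.restrict_le_self _
      _ ≤ volume (ball (0:R3) (t ^ (1 / γ))) := measure_mono hsub
      _ = ENNReal.ofReal ((t ^ (1/γ)) ^ (Module.finrank ℝ R3)) * volume (ball (0:R3) 1) :=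
          Measure.addHaar_ball _ _ (rpow_nonneg ht.le _)
      _ = ENNReal.ofReal (t ^ (3 / γ)) * volume (ball (0:R3) 1) := by
          congr 1
          rw [finrank_euclideanSpace_fin, ← Real.rpow_natCast (t ^ (1/γ)) 3,
            ← Real.rpow_mul ht.le, show (1/γ * (3:ℕ) : ℝ) = 3/γ by push_cast; ring]
  have hsplit : (Ioi (0:ℝ)) = Ioc (0:ℝ) 1 ∪ Ioi (1:ℝ) := (Ioc_union_Ioi_eq_Ioi zero_le_one).symm
  rw [hsplit, lintegral_union measurableSet_Ioi Ioc_disjoint_Ioi_same]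
  have h1 : ∫⁻ t in Ioc (0:ℝ) 1, μR {a : R3 | t < ‖a‖ ^ γ} < ⊤ := by
    calc ∫⁻ t in Ioc (0:ℝ) 1, μR {a : R3 | t < ‖a‖ ^ γ}
        ≤ ∫⁻ _t in Ioc (0:ℝ) 1, volume (closedBall (0:R3) 1) :=
          setLIntegral_mono measurable_const fun t _ => by
            calc μR {a : R3 | t < ‖a‖ ^ γ} ≤ volume.restrict (closedBall (0:R3) 1) univ :=
                  measure_mono (subset_univ _)
              _ = volume (closedBall (0:R3) 1) := by
                  rw [Measure.restrict_apply_univ]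
      _ = volume (closedBall (0:R3) 1) * volume (Ioc (0:ℝ) 1) := setLIntegral_const _ _
      _ < ⊤ := by
          apply ENNReal.mul_lt_top hB
          rw [Real.volume_Ioc]
          exact ENNReal.ofReal_lt_top
  have h3γ : 3 / γ < -1 := by
    rw [div_lt_iff_of_neg h2]
    nlinarith
  have h2' : ∫⁻ t in Ioi (1:ℝ), μR {a : R3 | t < ‖a‖ ^ γ} < ⊤ := by
    have hI : IntegrableOn (fun t : ℝ => t ^ (3 / γ)) (Ioi 1) volume :=
      integrableOn_Ioi_rpow_of_lt h3γ one_pos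
    have hfin : ∫⁻ t in Ioi (1:ℝ), ENNReal.ofReal (t ^ (3 / γ)) < ⊤ := by
      refine lt_of_le_of_lt (lintegral_mono fun t => ?_) hI.2
      exact Real.ofReal_le_enorm _
    calc ∫⁻ t in Ioi (1:ℝ), μR {a : R3 | t < ‖a‖ ^ γ}
        ≤ ∫⁻ t in Ioi (1:ℝ), ENNReal.ofReal (t ^ (3 / γ)) * volume (ball (0:R3) 1) :=
          setLIntegral_mono (((measurable_id'.pow_const _).ennreal_ofReal).mul_const _) fun t ht =>
            hball t (lt_trans one_pos ht)
      _ = (∫⁻ t in Ioi (1:ℝ), ENNReal.ofReal (t ^ (3 / γ))) * volume (ball (0:R3) 1) := by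
          rw [lintegral_mul_const _ ((measurable_id'.pow_const _).ennreal_ofReal)]
      _ < ⊤ := ENNReal.mul_lt_top hfin hVb
  exact ENNReal.add_lt_top.2 ⟨h1, h2'⟩

/-- For `γ ∈ (-3,1]` and `β > 3 + max{0,γ}`, the double integral
`∫∫ (1+|v|²)^{-β/2} (1+|u|²)^{-β/2} |v−u|^γ du dv` is finite. -/
theorem weighted_kernel_integrable
    (γ β : ℝ) (hγ : γ ∈ Set.Ioc (-3 : ℝ) 1) (hβ : 3 + max 0 γ < β) :
    Integrable (fun p : R3 × R3 =>
      (1 + ‖p.1‖ ^ 2) ^ (-β / 2) * (1 + ‖p.2‖ ^ 2) ^ (-β / 2) * ‖p.1 - p.2‖ ^ γ)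
      (volume : Measure (R3 × R3)) := by
  obtain ⟨hγ1, hγ2⟩ := hγ
  have hβ3 : 3 < β := by
    have := le_max_left (0:ℝ) γ; linarith
  have hpos : ∀ v : R3, (0:ℝ) < 1 + ‖v‖ ^ 2 := fun v => by positivity
  have hmeas : AEStronglyMeasurable (fun p : R3 × R3 =>
      (1 + ‖p.1‖ ^ 2) ^ (-β / 2) * (1 + ‖p.2‖ ^ 2) ^ (-β / 2) * ‖p.1 - p.2‖ ^ γ)
      (volume : Measure (R3 × R3)) := by
    apply Measurable.aestronglyMeasurable
    exact ((((measurable_fst.norm.pow_const 2).const_add 1).pow_const _).mul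
      (((measurable_snd.norm.pow_const 2).const_add 1).pow_const _)).mul
      ((measurable_fst.sub measurable_snd).norm.pow_const γ)
  set f : R3 → ℝ := fun v => (1 + ‖v‖ ^ 2) ^ (-β / 2) with hfdef
  have hfnn : ∀ v, 0 ≤ f v := fun v => rpow_nonneg (hpos v).le _
  have hfle1 : ∀ v, f v ≤ 1 := fun v =>
    rpow_le_one_of_one_le_of_nonpos (by nlinarith [sq_nonneg ‖v‖]) (by linarith)
  have hfrank : ∀ r : ℝ, 3 < r → (Module.finrank ℝ R3 : ℝ) < r := by
    intro r hr
    rw [finrank_euclideanSpace_fin]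
    exact_mod_cast hr
  have hf : Integrable f volume :=
    integrable_rpow_neg_one_add_norm_sq (hfrank β hβ3)
  rcases le_or_gt γ 0 with hγ0 | hγ0
  · -- case γ ≤ 0
    rcases eq_or_lt_of_le hγ0 with hγeq | hγlt
    · -- γ = 0
      rw [Measure.volume_eq_prod]
      refine (hf.mul_prod hf).congr (Filter.Eventually.of_forall fun p => ?_)
      simp [hfdef, hγeq, Real.rpow_zero]
    · -- γ < 0
      set h : R3 → ℝ := (closedBall (0:R3) 1).indicator (fun w => ‖w‖ ^ γ) with hhdef
      have hhnn : ∀ w, 0 ≤ h w :=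
        fun w => indicator_nonneg (fun w _ => rpow_nonneg (norm_nonneg w) γ) w
      have hh : Integrable h volume :=
        (integrable_indicator_iff measurableSet_closedBall).2 (singular_integrableOn hγ1 hγlt)
      have hF : Integrable (fun p : R3 × R3 => f p.1 * h p.2) (volume.prod volume) :=
        hf.mul_prod hh
      have hT : MeasurePreserving (fun z : R3 × R3 => (z.1, z.2 - z.1))
          (volume.prod volume) (volume.prod volume) :=
        measurePreserving_prod_sub volume volume
      have hG : Integrable (fun p : R3 × R3 => f p.1 * h (p.2 - p.1)) (volume.prod volume) := by
        have := (hT.integrable_comp hF.aestronglyMeasurable).2 hF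
        simpa [Function.comp_def] using this
      have hg : Integrable (fun p : R3 × R3 => f p.1 * h (p.2 - p.1) + f p.1 * f p.2)
          (volume : Measure (R3 × R3)) := by
        rw [Measure.volume_eq_prod]
        exact hG.add (hf.mul_prod hf)
      refine Integrable.mono' hg hmeas (Filter.Eventually.of_forall fun p => ?_)
      have hKnn : (0:ℝ) ≤ ‖p.1 - p.2‖ ^ γ := rpow_nonneg (norm_nonneg _) _
      have habs : ‖(1 + ‖p.1‖ ^ 2) ^ (-β / 2) * (1 + ‖p.2‖ ^ 2) ^ (-β / 2) * ‖p.1 - p.2‖ ^ γ‖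
          = f p.1 * f p.2 * ‖p.1 - p.2‖ ^ γ := by
        rw [Real.norm_eq_abs, abs_of_nonneg]
        exact mul_nonneg (mul_nonneg (hfnn p.1) (hfnn p.2)) hKnn
      rw [habs]
      by_cases hd : ‖p.1 - p.2‖ ≤ 1
      · have hhval : h (p.2 - p.1) = ‖p.1 - p.2‖ ^ γ := by
          rw [hhdef, indicator_of_mem, norm_sub_rev]
          rw [mem_closedBall_zero_iff, norm_sub_rev]
          exact hd
        calc f p.1 * f p.2 * ‖p.1 - p.2‖ ^ γ ≤ f p.1 * 1 * ‖p.1 - p.2‖ ^ γ :=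
              mul_le_mul_of_nonneg_right
                (mul_le_mul_of_nonneg_left (hfle1 p.2) (hfnn p.1)) hKnn
          _ = f p.1 * h (p.2 - p.1) := by rw [hhval]; ring
          _ ≤ f p.1 * h (p.2 - p.1) + f p.1 * f p.2 :=
              le_add_of_nonneg_right (mul_nonneg (hfnn p.1) (hfnn p.2))
      · have hK1 : ‖p.1 - p.2‖ ^ γ ≤ 1 :=
          rpow_le_one_of_one_le_of_nonpos (le_of_not_ge hd) hγ0
        calc f p.1 * f p.2 * ‖p.1 - p.2‖ ^ γ ≤ f p.1 * f p.2 * 1 :=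
              mul_le_mul_of_nonneg_left hK1 (mul_nonneg (hfnn p.1) (hfnn p.2))
          _ = f p.1 * f p.2 := mul_one _
          _ ≤ f p.1 * h (p.2 - p.1) + f p.1 * f p.2 :=
              le_add_of_nonneg_left (mul_nonneg (hfnn p.1) (hhnn _))
  · -- case 0 < γ
    have hβγ : 3 + γ < β := by rwa [max_eq_right hγ0.le] at hβ
    set f2 : R3 → ℝ := fun v => (1 + ‖v‖ ^ 2) ^ (-(β - γ) / 2) with hf2def
    have hf2 : Integrable f2 volume :=
      integrable_rpow_neg_one_add_norm_sq (hfrank (β - γ) (by linarith))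
    have hg : Integrable (fun p : R3 × R3 => (2:ℝ) ^ γ * (f2 p.1 * f2 p.2))
        (volume : Measure (R3 × R3)) := by
      rw [Measure.volume_eq_prod]
      exact (hf2.mul_prod hf2).const_mul _
    refine Integrable.mono' hg hmeas (Filter.Eventually.of_forall fun p => ?_)
    have hKnn : (0:ℝ) ≤ ‖p.1 - p.2‖ ^ γ := rpow_nonneg (norm_nonneg _) _
    have habs : ‖(1 + ‖p.1‖ ^ 2) ^ (-β / 2) * (1 + ‖p.2‖ ^ 2) ^ (-β / 2) * ‖p.1 - p.2‖ ^ γ‖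
        = f p.1 * f p.2 * ‖p.1 - p.2‖ ^ γ := by
      rw [Real.norm_eq_abs, abs_of_nonneg]
      exact mul_nonneg (mul_nonneg (hfnn p.1) (hfnn p.2)) hKnn
    rw [habs]
    have sqrt_le : ∀ v : R3, ‖v‖ ≤ (1 + ‖v‖ ^ 2) ^ ((1:ℝ)/2) := by
      intro v
      have h1 : ‖v‖ ≤ Real.sqrt (1 + ‖v‖ ^ 2) := by
        rw [show (1 + ‖v‖ ^ 2 : ℝ) = ‖v‖ ^ 2 + 1 by ring]
        exact (Real.le_sqrt (norm_nonneg v) (by positivity)).2 (by nlinarith)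
      rwa [Real.sqrt_eq_rpow] at h1
    have one_le_sq : ∀ v : R3, (1:ℝ) ≤ (1 + ‖v‖ ^ 2) ^ ((1:ℝ)/2) := fun v =>
      Real.one_le_rpow (by nlinarith [sq_nonneg ‖v‖]) (by norm_num)
    set A := (1 + ‖p.1‖ ^ 2) ^ ((1:ℝ)/2) with hA
    set B := (1 + ‖p.2‖ ^ 2) ^ ((1:ℝ)/2) with hB
    have hchain : ‖p.1 - p.2‖ ≤ 2 * (A * B) := by
      have h1 := norm_sub_le p.1 p.2
      have h2 := sqrt_le p.1
      have h3 := sqrt_le p.2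
      have h4 := one_le_sq p.1
      have h5 := one_le_sq p.2
      nlinarith
    have hKle : ‖p.1 - p.2‖ ^ γ ≤ (2:ℝ) ^ γ * ((1 + ‖p.1‖ ^ 2) ^ (γ/2) * (1 + ‖p.2‖ ^ 2) ^ (γ/2)) := by
      have := Real.rpow_le_rpow (norm_nonneg _) hchain hγ0.le
      rwa [Real.mul_rpow (by norm_num) (by positivity),
        Real.mul_rpow (by positivity) (by positivity),
        hA, hB, ← Real.rpow_mul (hpos p.1).le, ← Real.rpow_mul (hpos p.2).le,
        show (1:ℝ)/2 * γ = γ/2 by ring] at this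
    have hcollapse : ∀ v : R3, f v * (1 + ‖v‖ ^ 2) ^ (γ/2) = f2 v := by
      intro v
      rw [hfdef, hf2def]
      rw [← Real.rpow_add (hpos v), show -β / 2 + γ/2 = -(β - γ)/2 by ring]
    calc f p.1 * f p.2 * ‖p.1 - p.2‖ ^ γ
        ≤ f p.1 * f p.2 * ((2:ℝ) ^ γ * ((1 + ‖p.1‖ ^ 2) ^ (γ/2) * (1 + ‖p.2‖ ^ 2) ^ (γ/2))) :=
          mul_le_mul_of_nonneg_left hKle (mul_nonneg (hfnn p.1) (hfnn p.2))
      _ = (2:ℝ) ^ γ * ((f p.1 * (1 + ‖p.1‖ ^ 2) ^ (γ/2)) * (f p.2 * (1 + ‖p.2‖ ^ 2) ^ (γ/2))) := by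
          ring
      _ = (2:ℝ) ^ γ * (f2 p.1 * f2 p.2) := by
          rw [hcollapse p.1, hcollapse p.2]
end
end

section
/- Let γ ∈ (-3,1] and β > 3 + max{0,γ}. Then there exists a constant C > 0 (depending only on β and γ) such that for all v ∈ ℝ³, ∫_{ℝ³} (1+|v|+|u|)^{-β} |v−u|^γ du ≤ C·(1+|v|)^{-β+3+max{0,γ}}. -/
open MeasureTheory Real

noncomputable section

namespace ConvWeightAux

open Metric

lemma finrank_R3 : Module.finrank ℝ R3 = 3 := by
  simp [finrank_euclideanSpace]

lemma int_one_add {s : ℝ} (hs : 3 < s) :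
    Integrable (fun x : R3 => (1 + ‖x‖) ^ (-s)) := by
  apply integrable_one_add_norm (E := R3)
  rw [finrank_R3]
  exact_mod_cast hs

lemma lemInt {s : ℝ} (hs : 3 < s) {a : ℝ} (ha : 1 ≤ a) :
    Integrable (fun u : R3 => (a + ‖u‖) ^ (-s)) := by
  have ha0 : (0 : ℝ) < a := lt_of_lt_of_le one_pos ha
  refine (int_one_add hs).mono' ?_ ?_
  · apply Continuous.aestronglyMeasurable
    apply Continuous.rpow_const (continuous_const.add continuous_norm)
    intro x
    left
    exact (by linarith [norm_nonneg x] : (0:ℝ) < a + ‖x‖).ne'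
  · filter_upwards with u
    rw [Real.norm_eq_abs, abs_of_nonneg (by positivity)]
    exact Real.rpow_le_rpow_of_nonpos (by positivity)
      (by linarith) (by linarith)

lemma lemA {s : ℝ} (hs : 3 < s) {a : ℝ} (ha : 1 ≤ a) :
    (∫ u : R3, (a + ‖u‖) ^ (-s)) = a ^ (3 - s) * ∫ x : R3, (1 + ‖x‖) ^ (-s) := by
  have ha0 : (0 : ℝ) < a := lt_of_lt_of_le one_pos ha
  have h := MeasureTheory.Measure.integral_comp_smul (volume : Measure R3)
      (fun u : R3 => (a + ‖u‖) ^ (-s)) a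
  rw [finrank_R3] at h
  have e1 : ∀ x : R3, (a + ‖a • x‖) ^ (-s) = a ^ (-s) * (1 + ‖x‖) ^ (-s) := by
    intro x
    rw [norm_smul, Real.norm_eq_abs, abs_of_pos ha0,
      show a + a * ‖x‖ = a * (1 + ‖x‖) by ring,
      Real.mul_rpow ha0.le (by positivity)]
  simp_rw [e1] at h
  rw [integral_const_mul, abs_of_pos (by positivity), smul_eq_mul] at h
  have h3 : ((a : ℝ) ^ (3 : ℕ))⁻¹ ≠ 0 := by positivity
  have : (∫ u : R3, (a + ‖u‖) ^ (-s))
      = a ^ (3 : ℕ) * (a ^ (-s) * ∫ x : R3, (1 + ‖x‖) ^ (-s)) := by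
    field_simp at h
    rw [← h]
    ring
  rw [this, ← Real.rpow_natCast a 3, ← mul_assoc, ← Real.rpow_add ha0]
  norm_num [sub_eq_add_neg, add_comm]

lemma C0_pos {s : ℝ} (hs : 3 < s) : 0 < ∫ x : R3, (1 + ‖x‖) ^ (-s) := by
  rw [integral_pos_iff_support_of_nonneg (fun x => by positivity) (int_one_add hs)]
  have hsupp : Function.support (fun x : R3 => (1 + ‖x‖) ^ (-s)) = Set.univ := by
    ext x
    simp only [Function.mem_support, Set.mem_univ, iff_true]
    positivity
  rw [hsupp]
  exact lt_of_lt_of_le (measure_ball_pos volume (0 : R3) one_pos)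
    (measure_mono (Set.subset_univ _))

lemma lemB {p : ℝ} (h1 : -3 < p) (h2 : p < 0) :
    IntegrableOn (fun x : R3 => ‖x‖ ^ p) (ball 0 1) := by
  classical
  have hmeas : Measurable (fun x : R3 => ‖x‖ ^ p) := measurable_norm.pow_const p
  refine ⟨hmeas.aestronglyMeasurable.restrict, ?_⟩
  rw [hasFiniteIntegral_iff_ofReal (Filter.Eventually.of_forall fun x => by positivity)]
  set A : ℕ → Set R3 := fun k => ball 0 ((1/2 : ℝ)^k) \ ball 0 ((1/2 : ℝ)^(k+1)) with hA
  have hcover : ball (0 : R3) 1 ⊆ {0} ∪ ⋃ k, A k := by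
    intro x hx
    rcases eq_or_ne x 0 with rfl | hx0
    · exact Or.inl rfl
    right
    have hx1 : ‖x‖ < 1 := by simpa [mem_ball, dist_zero_right] using hx
    have hx2 : 0 < ‖x‖ := norm_pos_iff.mpr hx0
    have hex : ∃ n, (1/2 : ℝ)^n ≤ ‖x‖ := by
      obtain ⟨n, hn⟩ := exists_pow_lt_of_lt_one hx2 (by norm_num : (1/2 : ℝ) < 1)
      exact ⟨n, hn.le⟩
    have hn := Nat.find_spec hex
    have hn0 : Nat.find hex ≠ 0 := by
      intro h
      rw [h] at hn
      simp at hn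
      linarith
    obtain ⟨k, hk⟩ := Nat.exists_eq_succ_of_ne_zero hn0
    have hkk : ¬ ((1/2 : ℝ)^k ≤ ‖x‖) := Nat.find_min hex (by omega)
    rw [hk] at hn
    refine Set.mem_iUnion.mpr ⟨k, ?_, ?_⟩
    · simpa [mem_ball, dist_zero_right] using not_le.mp hkk
    · simp only [mem_ball, dist_zero_right, Set.mem_setOf_eq, not_lt]
      simpa using hn
  have hAmeas : ∀ k, MeasurableSet (A k) := fun k =>
    measurableSet_ball.diff measurableSet_ball
  set B := (volume : Measure R3) (ball (0 : R3) 1) with hB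
  have hBfin : B < ⊤ := measure_ball_lt_top
  have hkey : ∀ k : ℕ, ((1/2 : ℝ)^(k+1)) ^ p * ((1/2 : ℝ)^k)^(3 : ℕ)
      = (1/2 : ℝ) ^ p * ((1/2 : ℝ) ^ (p+3))^k := by
    intro k
    have hhalf : (0 : ℝ) ≤ 1/2 := by norm_num
    rw [← Real.rpow_natCast ((1/2 : ℝ)) (k+1), ← Real.rpow_mul hhalf,
      ← Real.rpow_natCast ((1/2 : ℝ)^k) 3, ← Real.rpow_natCast ((1/2 : ℝ)) k,
      ← Real.rpow_mul hhalf,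
      ← Real.rpow_natCast ((1/2 : ℝ) ^ (p+3)) k, ← Real.rpow_mul hhalf,
      ← Real.rpow_add (by norm_num : (0:ℝ) < 1/2),
      ← Real.rpow_add (by norm_num : (0:ℝ) < 1/2)]
    congr 1
    push_cast
    ring
  have hAk : ∀ k : ℕ, (∫⁻ x in A k, ENNReal.ofReal (‖x‖ ^ p))
      ≤ ENNReal.ofReal ((1/2 : ℝ) ^ p * ((1/2 : ℝ) ^ (p+3))^k) * B := by
    intro k
    have hb : ∀ x ∈ A k, ENNReal.ofReal (‖x‖ ^ p)
        ≤ ENNReal.ofReal (((1/2 : ℝ)^(k+1)) ^ p) := by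
      intro x hx
      apply ENNReal.ofReal_le_ofReal
      apply Real.rpow_le_rpow_of_nonpos (by positivity) ?_ h2.le
      have := hx.2
      simpa [mem_ball, dist_zero_right, not_lt] using this
    calc (∫⁻ x in A k, ENNReal.ofReal (‖x‖ ^ p))
        ≤ ∫⁻ _ in A k, ENNReal.ofReal (((1/2 : ℝ)^(k+1)) ^ p) :=
          setLIntegral_mono' (hAmeas k) hb
      _ = ENNReal.ofReal (((1/2 : ℝ)^(k+1)) ^ p) * (volume : Measure R3) (A k) := by
          rw [setLIntegral_const]
      _ ≤ ENNReal.ofReal (((1/2 : ℝ)^(k+1)) ^ p)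
            * (volume : Measure R3) (ball (0 : R3) ((1/2 : ℝ)^k)) := by
          gcongr
          exact Set.diff_subset
      _ = ENNReal.ofReal (((1/2 : ℝ)^(k+1)) ^ p)
            * (ENNReal.ofReal (((1/2 : ℝ)^k) ^ (3 : ℕ)) * B) := by
          rw [Measure.addHaar_ball (volume : Measure R3) 0 (by positivity), finrank_R3, hB]
      _ = ENNReal.ofReal ((1/2 : ℝ) ^ p * ((1/2 : ℝ) ^ (p+3))^k) * B := by
          rw [← mul_assoc, ← ENNReal.ofReal_mul (by positivity), hkey k]
  calc (∫⁻ x in ball (0 : R3) 1, ENNReal.ofReal (‖x‖ ^ p))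
      ≤ ∫⁻ x in ({0} ∪ ⋃ k, A k : Set R3), ENNReal.ofReal (‖x‖ ^ p) :=
        lintegral_mono_set hcover
    _ ≤ (∫⁻ x in ({0} : Set R3), ENNReal.ofReal (‖x‖ ^ p))
          + ∫⁻ x in (⋃ k, A k : Set R3), ENNReal.ofReal (‖x‖ ^ p) :=
        lintegral_union_le _ _ _
    _ ≤ 0 + ∑' k, ∫⁻ x in A k, ENNReal.ofReal (‖x‖ ^ p) := by
        gcongr
        · rw [setLIntegral_measure_zero _ _ (measure_singleton 0)]
        · exact lintegral_iUnion_le _ _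
    _ ≤ 0 + ∑' k, ENNReal.ofReal ((1/2 : ℝ) ^ p * ((1/2 : ℝ) ^ (p+3))^k) * B :=
        by gcongr with k; exact hAk k
    _ < ⊤ := by
        rw [zero_add]
        have hq1 : (1/2 : ℝ) ^ (p+3) < 1 :=
          Real.rpow_lt_one (by norm_num) (by norm_num) (by linarith)
        have hq0 : (0 : ℝ) ≤ (1/2 : ℝ) ^ (p+3) := by positivity
        have : ∀ k : ℕ, ENNReal.ofReal ((1/2 : ℝ) ^ p * ((1/2 : ℝ) ^ (p+3))^k) * B
            = (ENNReal.ofReal ((1/2 : ℝ) ^ p) * B) * (ENNReal.ofReal ((1/2 : ℝ) ^ (p+3)))^k := by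
          intro k
          rw [ENNReal.ofReal_mul (by positivity), ENNReal.ofReal_pow hq0]
          ring
        simp_rw [this]
        rw [ENNReal.tsum_mul_left, ENNReal.tsum_geometric]
        apply ENNReal.mul_lt_top
        · exact ENNReal.mul_lt_top ENNReal.ofReal_lt_top hBfin
        · rw [ENNReal.inv_lt_top, tsub_pos_iff_lt]
          exact ENNReal.ofReal_lt_one.mpr hq1

end ConvWeightAux

open ConvWeightAux Metric

/-- The estimate (2.12-3): for `γ ∈ (-3,1]` and `β > 3 + max{0,γ}` there exists `C > 0`
such that `∫ (1+|v|+|u|)^{-β} |v−u|^γ du ≤ C (1+|v|)^{-β+3+max{0,γ}}` for all `v`. -/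
theorem convolution_weight_estimate
    (γ β : ℝ) (hγ : γ ∈ Set.Ioc (-3 : ℝ) 1) (hβ : 3 + max 0 γ < β) :
    ∃ C : ℝ, 0 < C ∧ ∀ v : R3,
      (∫ u : R3, (1 + ‖v‖ + ‖u‖) ^ (-β) * ‖v - u‖ ^ γ)
        ≤ C * (1 + ‖v‖) ^ (-β + 3 + max 0 γ) := by
  obtain ⟨hγl, hγu⟩ := hγ
  rcases le_or_gt 0 γ with hγ0 | hγ0
  · -- case γ ≥ 0
    rw [max_eq_right hγ0] at hβ ⊢
    have hs3 : 3 < β - γ := by linarith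
    refine ⟨∫ x : R3, (1 + ‖x‖) ^ (-(β - γ)), C0_pos hs3, fun v => ?_⟩
    have ha : 1 ≤ 1 + ‖v‖ := by linarith [norm_nonneg v]
    have hptwise : ∀ u : R3,
        (1 + ‖v‖ + ‖u‖) ^ (-β) * ‖v - u‖ ^ γ ≤ ((1 + ‖v‖) + ‖u‖) ^ (-(β - γ)) := by
      intro u
      have hb : (0 : ℝ) < 1 + ‖v‖ + ‖u‖ := by positivity
      have h1 : ‖v - u‖ ^ γ ≤ (1 + ‖v‖ + ‖u‖) ^ γ := by
        apply Real.rpow_le_rpow (norm_nonneg _) ?_ hγ0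
        calc ‖v - u‖ ≤ ‖v‖ + ‖u‖ := norm_sub_le v u
          _ ≤ 1 + ‖v‖ + ‖u‖ := by linarith
      calc (1 + ‖v‖ + ‖u‖) ^ (-β) * ‖v - u‖ ^ γ
          ≤ (1 + ‖v‖ + ‖u‖) ^ (-β) * (1 + ‖v‖ + ‖u‖) ^ γ := by
            apply mul_le_mul_of_nonneg_left h1 (by positivity)
        _ = ((1 + ‖v‖) + ‖u‖) ^ (-(β - γ)) := by
            rw [← Real.rpow_add hb]
            congr 1
            ring
    calc (∫ u : R3, (1 + ‖v‖ + ‖u‖) ^ (-β) * ‖v - u‖ ^ γ)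
        ≤ ∫ u : R3, ((1 + ‖v‖) + ‖u‖) ^ (-(β - γ)) := by
          apply integral_mono_of_nonneg
          · filter_upwards with u
            positivity
          · exact lemInt hs3 ha
          · filter_upwards with u
            exact hptwise u
      _ = (1 + ‖v‖) ^ (3 - (β - γ)) * ∫ x : R3, (1 + ‖x‖) ^ (-(β - γ)) := lemA hs3 ha
      _ = (∫ x : R3, (1 + ‖x‖) ^ (-(β - γ))) * (1 + ‖v‖) ^ (-β + 3 + γ) := by
          rw [mul_comm]
          congr 1
          ring_nf
  · -- case γ < 0
    rw [max_eq_left hγ0.le] at hβ ⊢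
    have hβ3 : 3 < β := by linarith
    set C0 := ∫ x : R3, (1 + ‖x‖) ^ (-β) with hC0def
    set c1 := ∫ x in ball (0 : R3) 1, ‖x‖ ^ γ with hc1def
    have hC0 : 0 < C0 := C0_pos hβ3
    have hc1 : 0 ≤ c1 :=
      setIntegral_nonneg measurableSet_ball fun x _ => Real.rpow_nonneg (norm_nonneg _) _
    refine ⟨C0 + c1, by linarith, fun v => ?_⟩
    set a := 1 + ‖v‖ with hadef
    have ha : 1 ≤ a := by simp [hadef]
    have ha0 : (0 : ℝ) < a := by linarith
    set F : R3 → ℝ := (ball (0 : R3) 1).indicator (fun w => ‖w‖ ^ γ) with hFdef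
    have hF_nonneg : ∀ w, 0 ≤ F w := by
      intro w
      apply Set.indicator_nonneg
      intro x _
      positivity
    have hF_int : Integrable F :=
      (integrable_indicator_iff measurableSet_ball).mpr (lemB hγl hγ0)
    have hg_int : Integrable (fun u : R3 => a ^ (-β) * F (v - u)) :=
      (hF_int.comp_sub_left v).const_mul _
    have hh_int : Integrable (fun u : R3 => (a + ‖u‖) ^ (-β)) := lemInt hβ3 ha
    have hptwise : ∀ u : R3, (1 + ‖v‖ + ‖u‖) ^ (-β) * ‖v - u‖ ^ γ
        ≤ a ^ (-β) * F (v - u) + (a + ‖u‖) ^ (-β) := by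
      intro u
      have hb : (0 : ℝ) < a + ‖u‖ := by positivity
      rcases lt_or_ge ‖v - u‖ 1 with hvu | hvu
      · have hFval : F (v - u) = ‖v - u‖ ^ γ := by
          rw [hFdef, Set.indicator_of_mem (by simpa [mem_ball, dist_zero_right] using hvu)]
        have h1 : (a + ‖u‖) ^ (-β) ≤ a ^ (-β) :=
          Real.rpow_le_rpow_of_nonpos ha0 (by linarith [norm_nonneg u]) (by linarith)
        have : (1 + ‖v‖ + ‖u‖) ^ (-β) * ‖v - u‖ ^ γ ≤ a ^ (-β) * ‖v - u‖ ^ γ := by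
          apply mul_le_mul_of_nonneg_right h1 (Real.rpow_nonneg (norm_nonneg _) _)
        rw [hFval]
        have hpos : (0 : ℝ) ≤ (a + ‖u‖) ^ (-β) := by positivity
        linarith
      · have hle1 : ‖v - u‖ ^ γ ≤ 1 :=
          Real.rpow_le_one_of_one_le_of_nonpos hvu hγ0.le
        have h2 : (1 + ‖v‖ + ‖u‖) ^ (-β) * ‖v - u‖ ^ γ ≤ (a + ‖u‖) ^ (-β) := by
          calc (1 + ‖v‖ + ‖u‖) ^ (-β) * ‖v - u‖ ^ γ
              ≤ (1 + ‖v‖ + ‖u‖) ^ (-β) * 1 := by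
                apply mul_le_mul_of_nonneg_left hle1 (by positivity)
            _ = (a + ‖u‖) ^ (-β) := by rw [mul_one, hadef]
        have hpos : (0 : ℝ) ≤ a ^ (-β) * F (v - u) := by
          apply mul_nonneg (by positivity) (hF_nonneg _)
        linarith
    have hint_g : (∫ u : R3, a ^ (-β) * F (v - u)) = a ^ (-β) * c1 := by
      rw [integral_const_mul]
      congr 1
      rw [integral_sub_left_eq_self F volume v, hFdef,
        integral_indicator measurableSet_ball]
    have hint_h : (∫ u : R3, (a + ‖u‖) ^ (-β)) = a ^ (3 - β) * C0 := lemA hβ3 ha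
    calc (∫ u : R3, (1 + ‖v‖ + ‖u‖) ^ (-β) * ‖v - u‖ ^ γ)
        ≤ ∫ u : R3, (a ^ (-β) * F (v - u) + (a + ‖u‖) ^ (-β)) := by
          apply integral_mono_of_nonneg
          · filter_upwards with u
            positivity
          · exact hg_int.add hh_int
          · filter_upwards with u
            exact hptwise u
      _ = a ^ (-β) * c1 + a ^ (3 - β) * C0 := by
          rw [integral_add hg_int hh_int, hint_g, hint_h]
      _ ≤ a ^ (3 - β) * c1 + a ^ (3 - β) * C0 := by
          have : a ^ (-β) ≤ a ^ (3 - β) :=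
            Real.rpow_le_rpow_of_exponent_le ha (by linarith)
          nlinarith
      _ = (C0 + c1) * (1 + ‖v‖) ^ (-β + 3 + 0) := by
          rw [hadef]
          have : -β + 3 + 0 = 3 - β := by ring
          rw [this]
          ring
end
end

section
/- Let γ ∈ (-3,1] and β > 4. Then there exists a constant C > 0 (depending only on β and γ) such that for every two-dimensional linear subspace W ⊆ ℝ³, every v ∈ ℝ³, and every r > 0, ∫_W (1+|v+z|²)^{-β/4} (r+|z|)^{γ−1} dz ≤ C·r^{(γ−1)/2}, where the integral is with respect to two-dimensional Lebesgue measure on W. -/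
open MeasureTheory Real

noncomputable section

abbrev E2aux : Type := EuclideanSpace ℝ (Fin 2)

section AuxIntegrable

variable {F : Type*} [NormedAddCommGroup F] [InnerProductSpace ℝ F] [FiniteDimensional ℝ F]
  [MeasurableSpace F] [BorelSpace F]

/-- Integrability of `(1+‖z‖²)^(-β/4)` on a finite-dimensional inner product space
of dimension `< β/2`. -/
lemma aux_integrable (β : ℝ) (hβ : (Module.finrank ℝ F : ℝ) < β / 2) :
    Integrable (fun z : F => (1 + ‖z‖ ^ 2) ^ (-β / 4)) volume := by
  have hb2 : 0 < β / 2 := lt_of_le_of_lt (Nat.cast_nonneg _) hβ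
  have hmaj : Integrable
      (fun z : F => (2 : ℝ) ^ ((β / 2) / 2) * (1 + ‖z‖) ^ (-(β / 2))) volume :=
    (integrable_one_add_norm hβ).const_mul _
  refine hmaj.mono' ?_ ?_
  · apply Continuous.aestronglyMeasurable
    apply Continuous.rpow_const
    · fun_prop
    · intro z; left; positivity
  · refine Filter.Eventually.of_forall fun z => ?_
    have he : -β / 4 = -(β / 2) / 2 := by ring
    rw [Real.norm_eq_abs, abs_of_nonneg (by positivity), he]
    exact rpow_neg_one_add_norm_sq_le z hb2

end AuxIntegrable

set_option maxHeartbeats 1000000 in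
/-- The estimate (2.22-1): for `γ ∈ (-3,1]` and `β > 4` there is `C = C(β,γ) > 0` such
that for every plane `W ⊆ ℝ³` (a two-dimensional linear subspace, carrying its
two-dimensional Lebesgue measure), every `v ∈ ℝ³` and every `r > 0`,
`∫_W (1+|v+z|²)^{-β/4} (r+|z|)^{γ−1} dz ≤ C r^{(γ−1)/2}`. -/
theorem plane_integral_estimate
    (γ β : ℝ) (hγ : γ ∈ Set.Ioc (-3 : ℝ) 1) (hβ : 4 < β) :
    ∃ C : ℝ, 0 < C ∧
      ∀ W : Submodule ℝ R3, Module.finrank ℝ W = 2 →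
        ∀ v : R3, ∀ r : ℝ, 0 < r →
          (∫ z : W, (1 + ‖v + (z : R3)‖ ^ 2) ^ (-β / 4) * (r + ‖(z : R3)‖) ^ (γ - 1))
            ≤ C * r ^ ((γ - 1) / 2) := by
  obtain ⟨hγ3, hγ1⟩ := hγ
  set s : ℝ := (γ - 1) / 2 with hs_def
  have hs0 : s ≤ 0 := by simp only [hs_def]; linarith
  have hs2 : (-2 : ℝ) < s := by simp only [hs_def]; linarith
  -- the constants
  set A : ℝ := ∫ y : E2aux, (1 + ‖y‖ ^ 2) ^ (-β / 4) with hA_def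
  set J : ℝ := ∫ t in Set.Ioo (0 : ℝ) 1, t ^ (s + 1) with hJ_def
  set κ : ℝ := (volume (Metric.ball (0 : E2aux) 1)).toReal with hκ_def
  have hA0 : 0 ≤ A := integral_nonneg fun y => by positivity
  have hJ0 : 0 ≤ J :=
    setIntegral_nonneg measurableSet_Ioo fun t ht => Real.rpow_nonneg ht.1.le _
  have hκ0 : 0 ≤ κ := ENNReal.toReal_nonneg
  refine ⟨A + 2 * κ * J + 1, by positivity, ?_⟩
  intro W hW v r hr
  have hrs_pos : (0 : ℝ) < r ^ s := Real.rpow_pos_of_pos hr _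
  -- orthonormal basis of W and transfer to E2aux
  have hWfin : (Module.finrank ℝ W : ℝ) < β / 2 := by rw [hW]; norm_num; linarith
  let b : OrthonormalBasis (Fin 2) ℝ W := (stdOrthonormalBasis ℝ W).reindex (finCongr hW)
  have hmp : MeasurePreserving b.repr.symm volume volume :=
    b.measurePreserving_repr_symm
  have hme : MeasurableEmbedding (⇑b.repr.symm) :=
    b.repr.symm.toHomeomorph.measurableEmbedding
  -- projection of v onto W
  set v₁ : W := W.orthogonalProjectionOnto v with hv₁_def
  -- the two majorant pieces
  set G₁ : W → ℝ := fun z => (1 + ‖v₁ + z‖ ^ 2) ^ (-β / 4) with hG₁_def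
  set G₂ : W → ℝ :=
    Set.indicator (Metric.ball (0 : W) 1) (fun z => (r + ‖z‖) ^ s) with hG₂_def
  have hG₁_nonneg : ∀ z, 0 ≤ G₁ z := fun z => by
    simp only [hG₁_def]; positivity
  have hG₂_nonneg : ∀ z, 0 ≤ G₂ z := fun z => by
    simp only [hG₂_def]
    exact Set.indicator_nonneg (fun x _ => by positivity) z
  -- integrability
  have hG₁int : Integrable G₁ := by
    have := (aux_integrable (F := W) β hWfin).comp_add_left v₁
    exact this
  have hG₂int : Integrable G₂ := by
    rw [hG₂_def, integrable_indicator_iff measurableSet_ball]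
    refine Integrable.mono' (g := fun _ : W => r ^ s)
      (integrableOn_const measure_ball_lt_top.ne) ?_ ?_
    · refine Continuous.aestronglyMeasurable ?_ |>.restrict
      apply Continuous.rpow_const
      · fun_prop
      · intro z; left; positivity
    · refine Filter.Eventually.of_forall fun z => ?_
      rw [Real.norm_eq_abs, abs_of_nonneg (by positivity)]
      exact Real.rpow_le_rpow_of_nonpos hr (le_add_of_nonneg_right (norm_nonneg _)) hs0
  have hGint : Integrable (fun z => r ^ s * (G₁ z + G₂ z)) :=
    (hG₁int.add hG₂int).const_mul _
  -- pointwise bound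
  have hpt : ∀ z : W,
      (1 + ‖v + (z : R3)‖ ^ 2) ^ (-β / 4) * (r + ‖(z : R3)‖) ^ (γ - 1)
        ≤ r ^ s * (G₁ z + G₂ z) := by
    intro z
    have hb : (0 : ℝ) < r + ‖z‖ := by positivity
    have hnormcoe : ‖(z : R3)‖ = ‖z‖ := rfl
    -- Pythagoras
    have hkey : ‖v₁ + z‖ ^ 2 ≤ ‖v + (z : R3)‖ ^ 2 := by
      have hmem : v - (v₁ : R3) ∈ Wᗮ := W.sub_starProjection_mem_orthogonal v
      have hmem2 : ((v₁ + z : W) : R3) ∈ W := (v₁ + z).2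
      have hinner : inner (𝕜 := ℝ) (v - (v₁ : R3)) ((v₁ + z : W) : R3) = 0 :=
        Submodule.inner_left_of_mem_orthogonal hmem2 hmem
      have hdec : v + (z : R3) = (v - (v₁ : R3)) + ((v₁ + z : W) : R3) := by
        push_cast
        abel
      have h1 : ‖((v₁ + z : W) : R3)‖ = ‖v₁ + z‖ := rfl
      have hR : ‖v + (z : R3)‖ ^ 2
          = ‖v - (v₁ : R3)‖ ^ 2 + ‖v₁ + z‖ ^ 2 := by
        rw [hdec, norm_add_sq_real, hinner, h1]; ring
      nlinarith [sq_nonneg ‖v - (v₁ : R3)‖]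
    have hmono : (1 + ‖v + (z : R3)‖ ^ 2) ^ (-β / 4) ≤ (1 + ‖v₁ + z‖ ^ 2) ^ (-β / 4) := by
      apply Real.rpow_le_rpow_of_nonpos (by positivity) (by linarith) (by linarith)
    have hB1 : (1 + ‖v + (z : R3)‖ ^ 2) ^ (-β / 4) ≤ 1 :=
      Real.rpow_le_one_of_one_le_of_nonpos
        (le_add_of_nonneg_right (by positivity)) (by linarith)
    have hBpos : 0 ≤ (1 + ‖v + (z : R3)‖ ^ 2) ^ (-β / 4) := by positivity
    have hsplit : (r + ‖z‖) ^ (γ - 1) = (r + ‖z‖) ^ s * (r + ‖z‖) ^ s := by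
      rw [← Real.rpow_add hb]
      congr 1
      simp only [hs_def]; ring
    have htpos : 0 ≤ (r + ‖z‖) ^ s := Real.rpow_nonneg hb.le _
    have hrs : (r + ‖z‖) ^ s ≤ r ^ s :=
      Real.rpow_le_rpow_of_nonpos hr (le_add_of_nonneg_right (norm_nonneg _)) hs0
    rw [hnormcoe, hsplit]
    by_cases h1 : ‖z‖ < 1
    · have hG₂z : G₂ z = (r + ‖z‖) ^ s := by
        rw [hG₂_def]
        exact Set.indicator_of_mem (mem_ball_zero_iff.2 h1) _
      calc (1 + ‖v + (z : R3)‖ ^ 2) ^ (-β / 4) * ((r + ‖z‖) ^ s * (r + ‖z‖) ^ s)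
          ≤ 1 * ((r + ‖z‖) ^ s * (r + ‖z‖) ^ s) :=
            mul_le_mul_of_nonneg_right hB1 (by positivity)
        _ = (r + ‖z‖) ^ s * (r + ‖z‖) ^ s := one_mul _
        _ ≤ r ^ s * (r + ‖z‖) ^ s := mul_le_mul_of_nonneg_right hrs htpos
        _ ≤ r ^ s * (G₁ z + G₂ z) := by
            apply mul_le_mul_of_nonneg_left _ hrs_pos.le
            rw [hG₂z]
            exact le_add_of_nonneg_left (hG₁_nonneg z)
    · have hG₂z : G₂ z = 0 := by
        rw [hG₂_def]
        exact Set.indicator_of_notMem (by simpa [mem_ball_zero_iff] using h1) _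
      have ht1 : (r + ‖z‖) ^ s ≤ 1 := by
        apply Real.rpow_le_one_of_one_le_of_nonpos _ hs0
        push_neg at h1
        linarith
      calc (1 + ‖v + (z : R3)‖ ^ 2) ^ (-β / 4) * ((r + ‖z‖) ^ s * (r + ‖z‖) ^ s)
          ≤ G₁ z * ((r + ‖z‖) ^ s * (r + ‖z‖) ^ s) :=
            mul_le_mul_of_nonneg_right hmono (by positivity)
        _ ≤ G₁ z * (r ^ s * 1) := by
            apply mul_le_mul_of_nonneg_left _ (hG₁_nonneg z)
            exact mul_le_mul hrs ht1 htpos hrs_pos.le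
        _ = r ^ s * G₁ z := by ring
        _ = r ^ s * (G₁ z + G₂ z) := by rw [hG₂z, add_zero]
  -- integrate the pointwise bound
  have hstep1 :
      (∫ z : W, (1 + ‖v + (z : R3)‖ ^ 2) ^ (-β / 4) * (r + ‖(z : R3)‖) ^ (γ - 1))
        ≤ ∫ z : W, r ^ s * (G₁ z + G₂ z) := by
    refine integral_mono_of_nonneg ?_ hGint ?_
    · exact Filter.Eventually.of_forall fun z => by positivity
    · exact Filter.Eventually.of_forall hpt
  -- compute/bound the majorant integral
  have hG₁val : (∫ z : W, G₁ z) = A := by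
    have htrans : (∫ z : W, G₁ z) = ∫ z : W, (1 + ‖z‖ ^ 2) ^ (-β / 4) := by
      simp only [hG₁_def]
      exact integral_add_left_eq_self (fun z : W => (1 + ‖z‖ ^ 2) ^ (-β / 4)) v₁
    rw [htrans, ← hmp.integral_comp hme (fun z : W => (1 + ‖z‖ ^ 2) ^ (-β / 4))]
    simp only [LinearIsometryEquiv.norm_map]
    rfl
  have hG₂val : (∫ z : W, G₂ z) ≤ 2 * κ * J := by
    set f₀ : ℝ → ℝ := fun t => if t < 1 then (r + t) ^ s else 0 with hf₀_def
    have hcomp : ∀ y : E2aux, G₂ (b.repr.symm y) = f₀ ‖y‖ := by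
      intro y
      simp only [hf₀_def]
      by_cases h : ‖y‖ < 1
      · have hmem : b.repr.symm y ∈ Metric.ball (0 : W) 1 := by
          rw [mem_ball_zero_iff, LinearIsometryEquiv.norm_map]; exact h
        have h2 : G₂ (b.repr.symm y) = (r + ‖b.repr.symm y‖) ^ s := by
          rw [hG₂_def]; exact Set.indicator_of_mem hmem _
        rw [h2, LinearIsometryEquiv.norm_map, if_pos h]
      · have hmem : b.repr.symm y ∉ Metric.ball (0 : W) 1 := by
          rw [mem_ball_zero_iff, LinearIsometryEquiv.norm_map]; exact h
        have h2 : G₂ (b.repr.symm y) = 0 := by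
          rw [hG₂_def]; exact Set.indicator_of_notMem hmem _
        rw [h2, if_neg h]
    have htrans : (∫ z : W, G₂ z) = ∫ y : E2aux, f₀ ‖y‖ := by
      rw [← hmp.integral_comp hme G₂]
      exact integral_congr_ae (Filter.Eventually.of_forall hcomp)
    have hpolar : (∫ y : E2aux, f₀ ‖y‖)
        = (Module.finrank ℝ E2aux) •
          (volume (Metric.ball (0 : E2aux) 1)).toReal •
            ∫ t in Set.Ioi (0 : ℝ), t ^ (Module.finrank ℝ E2aux - 1) • f₀ t :=
      MeasureTheory.integral_fun_norm_addHaar volume f₀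
    have hrank : Module.finrank ℝ E2aux = 2 := finrank_euclideanSpace_fin
    rw [htrans, hpolar, hrank]
    have hP : (∫ t in Set.Ioi (0 : ℝ), t ^ (2 - 1) • f₀ t) ≤ J := by
      have hmajint : Integrable
          (Set.indicator (Set.Iio (1 : ℝ)) (fun t => t ^ (s + 1)))
          (volume.restrict (Set.Ioi (0 : ℝ))) := by
        rw [integrable_indicator_iff measurableSet_Iio]
        have : IntegrableOn (fun t : ℝ => t ^ (s + 1)) (Set.Ioo (0 : ℝ) 1) := by
          have h1 : IntervalIntegrable (fun t : ℝ => t ^ (s + 1)) volume 0 1 :=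
            intervalIntegral.intervalIntegrable_rpow' (by linarith)
          have h2 := (intervalIntegrable_iff_integrableOn_Ioc_of_le
            (by norm_num : (0:ℝ) ≤ 1)).1 h1
          exact h2.mono_set Set.Ioo_subset_Ioc_self
        rw [IntegrableOn, Measure.restrict_restrict measurableSet_Iio,
          Set.Iio_inter_Ioi]
        exact this
      refine le_trans (integral_mono_of_nonneg ?_ hmajint ?_) ?_
      · filter_upwards [ae_restrict_mem measurableSet_Ioi] with t ht
        simp only [hf₀_def, smul_eq_mul, show (2 - 1 : ℕ) = 1 from rfl, pow_one, Pi.zero_apply]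
        have ht0 : (0 : ℝ) < t := ht
        by_cases h1 : t < 1
        · rw [if_pos h1]
          exact mul_nonneg ht0.le (Real.rpow_nonneg (by positivity) _)
        · rw [if_neg h1, mul_zero]
      · filter_upwards [ae_restrict_mem measurableSet_Ioi] with t ht
        simp only [smul_eq_mul, show (2 - 1 : ℕ) = 1 from rfl, pow_one, hf₀_def]
        by_cases h1 : t < 1
        · rw [Set.indicator_of_mem (Set.mem_Iio.2 h1), if_pos h1]
          have h2 : (r + t) ^ s ≤ t ^ s :=
            Real.rpow_le_rpow_of_nonpos ht (by linarith) hs0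
          calc t * (r + t) ^ s ≤ t * t ^ s :=
                mul_le_mul_of_nonneg_left h2 (le_of_lt ht)
            _ = t ^ (s + 1) := by
                rw [Real.rpow_add ht, Real.rpow_one]; ring
        · rw [Set.indicator_of_notMem (by simpa using h1), if_neg h1, mul_zero]
      · rw [integral_indicator measurableSet_Iio,
          Measure.restrict_restrict measurableSet_Iio, Set.Iio_inter_Ioi]
    calc (2 : ℕ) • (volume (Metric.ball (0 : E2aux) 1)).toReal •
          ∫ t in Set.Ioi (0 : ℝ), t ^ (2 - 1) • f₀ t
        = 2 * κ * ∫ t in Set.Ioi (0 : ℝ), t ^ (2 - 1) • f₀ t := by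
          rw [nsmul_eq_mul, smul_eq_mul]; push_cast; ring
      _ ≤ 2 * κ * J := by
          apply mul_le_mul_of_nonneg_left hP (by positivity)
  -- assemble
  have hstep2 : (∫ z : W, r ^ s * (G₁ z + G₂ z)) ≤ r ^ s * (A + 2 * κ * J) := by
    rw [integral_const_mul, integral_add hG₁int hG₂int, hG₁val]
    apply mul_le_mul_of_nonneg_left _ hrs_pos.le
    linarith
  refine le_trans hstep1 (le_trans hstep2 ?_)
  rw [show (A + 2 * κ * J + 1) * r ^ ((γ - 1) / 2) = r ^ s * (A + 2 * κ * J + 1) by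
    rw [← hs_def]; ring]
  apply mul_le_mul_of_nonneg_left _ hrs_pos.le
  linarith
end
end

section
/- Let γ ∈ (-3,1], β > 6, and set p = 1 + (3+γ)/(4(9−γ)). Then the double integral ∫_{ℝ³}∫_{ℝ³} (1+|v|²)^{-pβ/4} (1+|η|²)^{-pβ/4} |η−v|^{p(γ−3)/2} dη dv is finite. -/
open MeasureTheory Real

noncomputable section

lemma aux_finrank_R3 : (Module.finrank ℝ R3 : ℝ) = 3 := by
  simp [finrank_euclideanSpace]

/-- The function `x ↦ ‖x‖ ^ a · 1_{0 < ‖x‖ ≤ 1}` is integrable on `ℝ³` when `-3 < a < 0`. -/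
lemma aux_indicator_integrable {a : ℝ} (ha : -3 < a) (ha0 : a < 0) :
    Integrable (fun x : R3 => Set.indicator (Set.Ioc (0:ℝ) 1) (fun y => y ^ a) ‖x‖)
      (volume : Measure R3) := by
  set f : ℝ → ℝ := Set.indicator (Set.Ioc (0:ℝ) 1) (fun y => y ^ a) with hfdef
  have hfm : Measurable f :=
    Measurable.indicator (by fun_prop) measurableSet_Ioc
  -- Step 1: `fun y => f y * y ^ 2` is integrable on `ℝ`.
  have h1 : Integrable (fun y : ℝ => f y * y ^ 2) volume := by
    have hbase : IntegrableOn (fun y : ℝ => y ^ (a + 2)) (Set.Ioc (0:ℝ) 1) volume := by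
      rw [← intervalIntegrable_iff_integrableOn_Ioc_of_le zero_le_one]
      exact intervalIntegral.intervalIntegrable_rpow' (by linarith)
    have h2 : IntegrableOn (fun y : ℝ => y ^ a * y ^ 2) (Set.Ioc (0:ℝ) 1) volume := by
      refine hbase.congr_fun (fun y hy => ?_) measurableSet_Ioc
      beta_reduce
      rw [rpow_add hy.1]
      norm_num [rpow_natCast]
    have h3 := h2.integrable_indicator measurableSet_Ioc
    refine h3.congr (Filter.Eventually.of_forall fun y => ?_)
    simp only [hfdef]
    exact Set.indicator_mul_left _ (fun y => y ^ a) (fun y => y ^ 2)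
  -- Step 2: transfer to the subtype `Ioi 0` with the comap measure.
  have hcomap : ∀ F : ℝ → ℝ, IntegrableOn F (Set.Ioi (0:ℝ)) volume ↔
      Integrable (fun y : Set.Ioi (0:ℝ) => F y.1)
        (Measure.comap Subtype.val (volume : Measure ℝ)) := by
    intro F
    rw [IntegrableOn, ← map_comap_subtype_coe measurableSet_Ioi,
      (MeasurableEmbedding.subtype_coe measurableSet_Ioi).integrable_map_iff]
    exact Iff.rfl
  -- Step 3: integrability with respect to `volumeIoiPow 2`.
  have hden : Integrable (fun y : Set.Ioi (0:ℝ) => f y.1) (Measure.volumeIoiPow 2) := by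
    rw [Measure.volumeIoiPow, integrable_withDensity_iff
      (by exact (measurable_subtype_coe.pow_const 2).ennreal_ofReal)
      (Filter.Eventually.of_forall fun y => ENNReal.ofReal_lt_top)]
    have h4 := (hcomap (fun y => f y * y ^ 2)).1 h1.integrableOn
    refine h4.congr (Filter.Eventually.of_forall fun y => ?_)
    simp [ENNReal.toReal_ofReal (sq_nonneg (y : ℝ))]
  -- Step 4: integrability on the product `sphere × Ioi 0`.
  have hprod : Integrable
      (fun q : Metric.sphere (0:R3) 1 × Set.Ioi (0:ℝ) => f q.2.1)
      (((volume : Measure R3).toSphere).prod (Measure.volumeIoiPow 2)) := by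
    have := (integrable_const (μ := (volume : Measure R3).toSphere) (c := (1:ℝ))).mul_prod hden
    simpa using this
  -- Step 5: use the polar-coordinates measure-preserving map.
  have hdim : Module.finrank ℝ R3 - 1 = 2 := by simp [finrank_euclideanSpace]
  have hmp := (volume : Measure R3).measurePreserving_homeomorphUnitSphereProd
  rw [hdim] at hmp
  have hmes : AEStronglyMeasurable
      (fun q : Metric.sphere (0:R3) 1 × Set.Ioi (0:ℝ) => f q.2.1)
      (((volume : Measure R3).toSphere).prod (Measure.volumeIoiPow 2)) :=
    (hfm.comp (measurable_subtype_coe.comp measurable_snd)).aestronglyMeasurable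
  have hcomp : Integrable (fun x : ({(0:R3)}ᶜ : Set R3) => f ‖(x : R3)‖)
      ((volume : Measure R3).comap Subtype.val) := by
    have h5 := (hmp.integrable_comp hmes).2 hprod
    refine h5.congr (Filter.Eventually.of_forall fun x => ?_)
    simp [Function.comp]
  -- Step 6: back to the full space.
  have h6 : IntegrableOn (fun x : R3 => f ‖x‖) ({(0:R3)}ᶜ) volume := by
    rw [IntegrableOn, ← map_comap_subtype_coe (measurableSet_singleton (0:R3)).compl,
      (MeasurableEmbedding.subtype_coe (measurableSet_singleton (0:R3)).compl).integrable_map_iff]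
    exact hcomp
  rwa [IntegrableOn, MeasureTheory.restrict_compl_singleton] at h6

/-- For `γ ∈ (-3,1]`, `β > 6` and `p = 1 + (3+γ)/(4(9−γ))`, the double integral
`∫∫ (1+|v|²)^{-pβ/4} (1+|η|²)^{-pβ/4} |η−v|^{p(γ−3)/2} dη dv` is finite. -/
theorem carleman_weight_integrable
    (γ β : ℝ) (hγ : γ ∈ Set.Ioc (-3 : ℝ) 1) (hβ : 6 < β)
    (p : ℝ) (hp : p = 1 + (3 + γ) / (4 * (9 - γ))) :
    Integrable (fun z : R3 × R3 =>
      (1 + ‖z.1‖ ^ 2) ^ (-(p * β) / 4) * (1 + ‖z.2‖ ^ 2) ^ (-(p * β) / 4) *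
        ‖z.2 - z.1‖ ^ (p * (γ - 3) / 2))
      (volume : Measure (R3 × R3)) := by
  obtain ⟨hγ1, hγ2⟩ := hγ
  have h9 : (0:ℝ) < 9 - γ := by linarith
  have hpe : p * (4 * (9 - γ)) = 4 * (9 - γ) + (3 + γ) := by
    rw [hp]; field_simp
  have hp1 : 1 < p := by nlinarith
  set q : ℝ := p * (γ - 3) / 2 with hq
  have hq0 : q < 0 := by
    have : p * (γ - 3) < 0 := mul_neg_of_pos_of_neg (by linarith) (by linarith)
    simp only [hq]; linarith
  have hq3 : -3 < q := by
    have key : p * (3 - γ) < 6 := by nlinarith [hpe]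
    simp only [hq]; nlinarith
  set e : ℝ := -(p * β) / 4 with he
  have he0 : e ≤ 0 := by
    have : 0 < p * β := mul_pos (by linarith) (by linarith)
    simp only [he]; linarith
  -- The weight `W`
  set W : R3 → ℝ := fun v => (1 + ‖v‖ ^ 2) ^ e with hWdef
  have hW : Integrable W (volume : Measure R3) := by
    have hrank : (Module.finrank ℝ R3 : ℝ) < p * β / 2 := by
      rw [aux_finrank_R3]; nlinarith
    have h := integrable_rpow_neg_one_add_norm_sq (E := R3) (μ := volume) hrank
    have hee : -(p * β / 2) / 2 = e := by simp only [he]; ring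
    simpa [hee] using h
  have hWnn : ∀ v : R3, 0 ≤ W v := fun v => rpow_nonneg (by positivity) _
  have hWle1 : ∀ v : R3, W v ≤ 1 := fun v =>
    rpow_le_one_of_one_le_of_nonpos (by nlinarith [sq_nonneg ‖v‖]) he0
  -- The localized kernel `G`
  set G : R3 → ℝ := fun x => Set.indicator (Set.Ioc (0:ℝ) 1) (fun y => y ^ q) ‖x‖ with hGdef
  have hG : Integrable G (volume : Measure R3) := aux_indicator_integrable hq3 hq0
  have hGnn : ∀ x : R3, 0 ≤ G x := by
    intro x
    simp only [hGdef]
    exact Set.indicator_nonneg (fun y hy => rpow_nonneg hy.1.le _) _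
  -- The majorant is integrable
  have hF1 : Integrable (fun z : R3 × R3 => W z.1 * G (z.2 - z.1))
      ((volume : Measure R3).prod (volume : Measure R3)) := by
    have hshear : MeasurePreserving (fun z : R3 × R3 => (z.1, z.2 - z.1))
        ((volume : Measure R3).prod volume) ((volume : Measure R3).prod volume) :=
      measurePreserving_prod_sub volume volume
    have hbase : Integrable (fun z : R3 × R3 => W z.1 * G z.2)
        ((volume : Measure R3).prod volume) := hW.mul_prod hG
    exact (hshear.integrable_comp hbase.aestronglyMeasurable).2 hbase
  have hF2 : Integrable (fun z : R3 × R3 => W z.1 * W z.2)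
      ((volume : Measure R3).prod (volume : Measure R3)) := hW.mul_prod hW
  have hMaj : Integrable (fun z : R3 × R3 => W z.1 * G (z.2 - z.1) + W z.1 * W z.2)
      ((volume : Measure R3).prod (volume : Measure R3)) := hF1.add hF2
  rw [show (volume : Measure (R3 × R3)) = (volume : Measure R3).prod volume from rfl]
  refine hMaj.mono' ?_ (Filter.Eventually.of_forall fun z => ?_)
  · -- measurability
    apply Measurable.aestronglyMeasurable
    have m1 : Measurable fun z : R3 × R3 => (1 + ‖z.1‖ ^ 2) ^ e := by fun_prop
    have m2 : Measurable fun z : R3 × R3 => (1 + ‖z.2‖ ^ 2) ^ e := by fun_prop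
    have m3 : Measurable fun z : R3 × R3 => ‖z.2 - z.1‖ ^ q := by fun_prop
    exact (m1.mul m2).mul m3
  · -- pointwise bound
    have hC : (0:ℝ) ≤ ‖z.2 - z.1‖ ^ q := rpow_nonneg (norm_nonneg _) _
    have habs : ‖(1 + ‖z.1‖ ^ 2) ^ e * (1 + ‖z.2‖ ^ 2) ^ e * ‖z.2 - z.1‖ ^ q‖ =
        W z.1 * W z.2 * ‖z.2 - z.1‖ ^ q := by
      rw [Real.norm_eq_abs, abs_of_nonneg]
      positivity
    rw [habs]
    by_cases h1 : ‖z.2 - z.1‖ ≤ 1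
    · by_cases h0 : ‖z.2 - z.1‖ = 0
      · rw [h0, Real.zero_rpow (ne_of_lt hq0), mul_zero]
        have := mul_nonneg (hWnn z.1) (hGnn (z.2 - z.1))
        have := mul_nonneg (hWnn z.1) (hWnn z.2)
        linarith
      · have hpos : 0 < ‖z.2 - z.1‖ := lt_of_le_of_ne (norm_nonneg _) (Ne.symm h0)
        have hGeq : G (z.2 - z.1) = ‖z.2 - z.1‖ ^ q := by
          simp only [hGdef]
          exact Set.indicator_of_mem (Set.mem_Ioc.mpr ⟨hpos, h1⟩) _
        have step : W z.1 * W z.2 * ‖z.2 - z.1‖ ^ q ≤ W z.1 * G (z.2 - z.1) := by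
          rw [hGeq]
          calc W z.1 * W z.2 * ‖z.2 - z.1‖ ^ q
              ≤ W z.1 * 1 * ‖z.2 - z.1‖ ^ q := by
                apply mul_le_mul_of_nonneg_right _ hC
                exact mul_le_mul_of_nonneg_left (hWle1 z.2) (hWnn z.1)
            _ = W z.1 * ‖z.2 - z.1‖ ^ q := by ring
        have := mul_nonneg (hWnn z.1) (hWnn z.2)
        linarith
    · push_neg at h1
      have hCle : ‖z.2 - z.1‖ ^ q ≤ 1 :=
        rpow_le_one_of_one_le_of_nonpos h1.le (le_of_lt hq0)
      have step : W z.1 * W z.2 * ‖z.2 - z.1‖ ^ q ≤ W z.1 * W z.2 := by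
        have hWW : 0 ≤ W z.1 * W z.2 := mul_nonneg (hWnn z.1) (hWnn z.2)
        calc W z.1 * W z.2 * ‖z.2 - z.1‖ ^ q ≤ W z.1 * W z.2 * 1 :=
              mul_le_mul_of_nonneg_left hCle hWW
          _ = W z.1 * W z.2 := mul_one _
      have := mul_nonneg (hWnn z.1) (hGnn (z.2 - z.1))
      linarith
end
end

section
/- Let F₀ be a near-vacuum initial datum built from (ρ₀, u₀, P) as described, with bounds 0 ≤ ρ₀(x) ≤ Ĉ and |u₀(x)| ≤ Ĉ for all x, |P(v)| ≤ C(1+|v|)^m for all v, and with ρ₀ ∈ L^p(ℝ³) and |u₀| ∈ L^p(ℝ³) for some p ∈ [1,∞). Then for any fixed times 0 < t₁ < T < ∞, sup_{(x,t) ∈ ℝ³×[t₁,T]} ∫_{ℝ³} |F₀(x+δ − v(t+σ), v) − F₀(x − vt, v)| dv → 0 as (σ,δ) → (0,0) in ℝ×ℝ³; in particular, for every fixed (x,t) ∈ ℝ³×(0,∞), ∫_{ℝ³} |F₀(x+δ − v(t+σ), v) − F₀(x − vt, v)| dv → 0 as (σ,δ) → (0,0). -/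
open MeasureTheory Real Set Filter
open scoped ENNReal NNReal

noncomputable section

namespace NVAux

lemma exp_lip {a b : ℝ} (ha : 0 ≤ a) (hb : 0 ≤ b) :
    |Real.exp (-a) - Real.exp (-b)| ≤ |a - b| := by
  wlog hab : a ≤ b generalizing a b
  · rw [abs_sub_comm, abs_sub_comm a b]; exact this hb ha (le_of_not_ge hab)
  have h1 : 1 + (a - b) ≤ Real.exp (a - b) := by
    have := Real.add_one_le_exp (a - b); linarith
  have h2 : Real.exp (-a) ≤ 1 := by
    rw [← Real.exp_zero]; exact Real.exp_le_exp.2 (by linarith)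
  have h3 : Real.exp (-b) = Real.exp (-a) * Real.exp (a - b) := by
    rw [← Real.exp_add]; ring_nf
  have h4 : 0 < Real.exp (-a) := Real.exp_pos _
  have h5 : Real.exp (-b) ≤ Real.exp (-a) := Real.exp_le_exp.2 (by linarith)
  rw [abs_of_nonneg (by linarith), abs_of_nonpos (by linarith : a - b ≤ 0), h3]
  nlinarith

lemma gauss_int : Integrable (fun v : R3 => Real.exp (-(4⁻¹ : ℝ) * ‖v‖ ^ 2)) := by
  have h := (GaussianFourier.integrable_cexp_neg_mul_sq_norm_add (V := R3)
    (b := (4⁻¹ : ℂ)) (by norm_num) 0 0).norm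
  refine h.congr (Eventually.of_forall fun v => ?_)
  simp [Complex.norm_exp, ← Complex.ofReal_pow]

lemma map_affine (a : R3) {s : ℝ} (hs : 0 < s) :
    Measure.map (fun v : R3 => a - s • v) volume
      = (ENNReal.ofReal (s ^ 3))⁻¹ • volume := by
  have h1 : (fun v : R3 => a - s • v) = (fun w : R3 => a + w) ∘ (fun v : R3 => (-s) • v) := by
    funext v; simp [sub_eq_add_neg, neg_smul]
  rw [h1, ← Measure.map_map (measurable_const_add a) (measurable_const_smul (-s) : Measurable fun v : R3 => (-s) • v)]
  rw [Measure.map_addHaar_smul (volume) (show (-s) ≠ 0 from by simp [ne_of_gt hs])]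
  rw [Measure.map_smul, map_add_left_eq_self]
  congr 1
  rw [finrank_euclideanSpace_fin]
  rw [show |((-s) ^ 3)⁻¹| = ((s:ℝ) ^ 3)⁻¹ by
    rw [abs_inv]; congr 1; rw [abs_pow, abs_neg, abs_of_pos hs]]
  exact ENNReal.ofReal_inv_of_pos (by positivity)

lemma tail {G : R3 → ℝ} (Gint : Integrable G) (hG : ∀ v, 0 ≤ G v) {ε : ℝ} (hε : 0 < ε) :
    ∃ R : ℝ, 1 ≤ R ∧ ∫ v in (Metric.ball (0:R3) R)ᶜ, G v ≤ ε := by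
  have hmono : Monotone (fun n : ℕ => Metric.ball (0:R3) n) := fun i j hij =>
    Metric.ball_subset_ball (by exact_mod_cast hij)
  have hU : (⋃ n : ℕ, Metric.ball (0:R3) n) = univ := by
    refine eq_univ_iff_forall.2 fun v => ?_
    obtain ⟨n, hn⟩ := exists_nat_gt ‖v‖
    exact mem_iUnion.2 ⟨n, by simpa [Metric.mem_ball, dist_zero_right] using hn⟩
  have htd := tendsto_setIntegral_of_monotone (fun n => measurableSet_ball) hmono
    (by rw [hU]; exact Gint.integrableOn)
  rw [hU, setIntegral_univ] at htd
  obtain ⟨N, hN⟩ := (Metric.tendsto_atTop.1 htd ε hε) |>.imp (fun N h => h N le_rfl)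
  refine ⟨max (N:ℝ) 1, le_max_right _ _, ?_⟩
  have hsub : (Metric.ball (0:R3) (max (N:ℝ) 1))ᶜ ⊆ (Metric.ball (0:R3) (N:ℝ))ᶜ :=
    compl_subset_compl.2 (Metric.ball_subset_ball (le_max_left _ _))
  have h1 : (∫ v in Metric.ball (0:R3) (N:ℝ), G v) + ∫ v in (Metric.ball (0:R3) (N:ℝ))ᶜ, G v
      = ∫ v, G v := integral_add_compl measurableSet_ball Gint
  have h2 : ∫ v in (Metric.ball (0:R3) (max (N:ℝ) 1))ᶜ, G v
      ≤ ∫ v in (Metric.ball (0:R3) (N:ℝ))ᶜ, G v :=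
    setIntegral_mono_set Gint.integrableOn (ae_of_all _ hG)
      (HasSubset.Subset.eventuallyLE hsub)
  rw [Real.dist_eq] at hN
  have := abs_lt.1 hN
  linarith

lemma int_norm_le {α E : Type*} [MeasurableSpace α] [NormedAddCommGroup E]
    {μ : Measure α} {f : α → E} (hf : AEStronglyMeasurable f μ) {c : ℝ} (hc : 0 ≤ c)
    (h : ∫⁻ v, ‖f v‖₊ ∂μ ≤ ENNReal.ofReal c) : ∫ v, ‖f v‖ ∂μ ≤ c := by
  have hfin : HasFiniteIntegral f μ := lt_of_le_of_lt h ENNReal.ofReal_lt_top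
  rw [integral_norm_eq_lintegral_enorm hf]
  exact ENNReal.toReal_le_of_le_ofReal hc h

lemma one_add_P_bound {C m r : ℝ} (hC : 0 < C) (hm : 0 < m) (hr : 0 ≤ r) {Pv : ℝ}
    (hPv : |Pv| ≤ C * (1 + r) ^ m) : |1 + Pv| ≤ (1 + C) * Real.exp (m * r) := by
  have h0 : (0:ℝ) < 1 + r := by linarith
  have h1 : (1 + r) ^ m ≤ Real.exp (m * r) := by
    rw [Real.rpow_def_of_pos h0]
    exact Real.exp_le_exp.2 (by
      have := Real.log_le_sub_one_of_pos h0
      nlinarith)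
  have h2 : (1:ℝ) ≤ Real.exp (m * r) := by
    rw [← Real.exp_zero]; exact Real.exp_le_exp.2 (by positivity)
  have h3 : |1 + Pv| ≤ 1 + |Pv| := by
    calc |1 + Pv| ≤ |(1:ℝ)| + |Pv| := abs_add_le _ _
    _ = 1 + |Pv| := by rw [abs_one]
  nlinarith [abs_nonneg Pv]

lemma exponent_bound {m Chat r d : ℝ} (hm : 0 < m) (hChat : 1 ≤ Chat) (hr : 0 ≤ r)
    (hd : 0 ≤ d) (hrd : r - Chat ≤ d) :
    m * r - d ^ 2 / 2 ≤ (m + Chat) ^ 2 - r ^ 2 / 4 := by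
  rcases le_or_gt r (2 * Chat) with h | h
  · nlinarith [sq_nonneg d, sq_nonneg (m + Chat), sq_nonneg r]
  · nlinarith [sq_nonneg (r / 2 - (m + Chat)), sq_nonneg (r - Chat)]

lemma c0_bounds : 0 ≤ (2 * π) ^ (-(3:ℝ)/2) ∧ (2 * π) ^ (-(3:ℝ)/2) ≤ (1:ℝ) := by
  constructor
  · exact Real.rpow_nonneg (by positivity) _
  · exact Real.rpow_le_one_of_one_le_of_nonpos
      (by nlinarith [Real.pi_gt_three]) (by norm_num)

lemma F_bound {C m Chat : ℝ} (hC : 0 < C) (hm : 0 < m) (hChat : 1 ≤ Chat)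
    {ρ Pv : ℝ} {v u : R3} (hρ0 : 0 ≤ ρ) (hρ1 : ρ ≤ Chat) (hu : ‖u‖ ≤ Chat)
    (hPv : |Pv| ≤ C * (1 + ‖v‖) ^ m) :
    |(2 * π) ^ (-(3:ℝ)/2) * ρ * (1 + Pv) * Real.exp (-‖v - u‖ ^ 2 / 2)|
      ≤ Chat * (1 + C) * Real.exp ((m + Chat) ^ 2) * Real.exp (-(4⁻¹:ℝ) * ‖v‖ ^ 2) := by
  obtain ⟨hc₀0, hc₀1⟩ := c0_bounds
  have hP1 : |1 + Pv| ≤ (1 + C) * Real.exp (m * ‖v‖) :=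
    one_add_P_bound hC hm (norm_nonneg v) hPv
  have hrd : ‖v‖ - Chat ≤ ‖v - u‖ := by
    have := norm_sub_norm_le v u; linarith
  have hexp : m * ‖v‖ - ‖v - u‖ ^ 2 / 2 ≤ (m + Chat) ^ 2 - ‖v‖ ^ 2 / 4 :=
    exponent_bound hm hChat (norm_nonneg v) (norm_nonneg _) hrd
  calc |(2 * π) ^ (-(3:ℝ)/2) * ρ * (1 + Pv) * Real.exp (-‖v - u‖ ^ 2 / 2)|
      = (2 * π) ^ (-(3:ℝ)/2) * ρ * |1 + Pv| * Real.exp (-‖v - u‖ ^ 2 / 2) := by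
        rw [abs_mul, abs_mul, abs_mul, abs_of_nonneg hc₀0, abs_of_nonneg hρ0,
          abs_of_nonneg (Real.exp_pos _).le]
    _ ≤ 1 * Chat * ((1 + C) * Real.exp (m * ‖v‖)) * Real.exp (-‖v - u‖ ^ 2 / 2) := by
        gcongr
    _ = Chat * (1 + C) * Real.exp (m * ‖v‖ - ‖v - u‖ ^ 2 / 2) := by
        have h9 : Real.exp (m * ‖v‖) * Real.exp (-‖v - u‖ ^ 2 / 2)
            = Real.exp (m * ‖v‖ - ‖v - u‖ ^ 2 / 2) := by
          rw [← Real.exp_add]; congr 1; ring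
        rw [← h9]; ring
    _ ≤ Chat * (1 + C) * Real.exp ((m + Chat) ^ 2 - ‖v‖ ^ 2 / 4) := by
        gcongr
    _ = Chat * (1 + C) * Real.exp ((m + Chat) ^ 2) * Real.exp (-(4⁻¹:ℝ) * ‖v‖ ^ 2) := by
        have h9 : Real.exp ((m + Chat) ^ 2) * Real.exp (-(4⁻¹:ℝ) * ‖v‖ ^ 2)
            = Real.exp ((m + Chat) ^ 2 - ‖v‖ ^ 2 / 4) := by
          rw [← Real.exp_add]; congr 1; ring
        rw [← h9]; ring

lemma F_lip {C m Chat R : ℝ} (hC : 0 < C) (hm : 0 < m) (hChat : 1 ≤ Chat) (hR : 0 < R)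
    {ρ₁ ρ₂ Pv : ℝ} {v u₁ u₂ : R3}
    (hρ₁0 : 0 ≤ ρ₁) (hρ₂0 : 0 ≤ ρ₂) (hρ₂1 : ρ₂ ≤ Chat)
    (hu₁ : ‖u₁‖ ≤ Chat) (hu₂ : ‖u₂‖ ≤ Chat)
    (hPv : |Pv| ≤ C * (1 + ‖v‖) ^ m) (hv : ‖v‖ ≤ R) :
    |(2 * π) ^ (-(3:ℝ)/2) * ρ₁ * (1 + Pv) * Real.exp (-‖v - u₁‖ ^ 2 / 2)
      - (2 * π) ^ (-(3:ℝ)/2) * ρ₂ * (1 + Pv) * Real.exp (-‖v - u₂‖ ^ 2 / 2)|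
      ≤ (1 + C) * (1 + R) ^ m * |ρ₁ - ρ₂|
        + (1 + C) * (1 + R) ^ m * (Chat * (R + Chat)) * ‖u₁ - u₂‖ := by
  obtain ⟨hc₀0, hc₀1⟩ := c0_bounds
  set c₀ : ℝ := (2 * π) ^ (-(3:ℝ)/2) with hc₀
  set E₁ : ℝ := Real.exp (-‖v - u₁‖ ^ 2 / 2) with hE₁
  set E₂ : ℝ := Real.exp (-‖v - u₂‖ ^ 2 / 2) with hE₂
  have hE₁1 : E₁ ≤ 1 := by
    rw [hE₁, ← Real.exp_zero]
    exact Real.exp_le_exp.2 (by nlinarith [sq_nonneg ‖v - u₁‖])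
  have hE₂1 : E₂ ≤ 1 := by
    rw [hE₂, ← Real.exp_zero]
    exact Real.exp_le_exp.2 (by nlinarith [sq_nonneg ‖v - u₂‖])
  have hE₁0 : 0 ≤ E₁ := (Real.exp_pos _).le
  have hE₂0 : 0 ≤ E₂ := (Real.exp_pos _).le
  have hRm1 : (1:ℝ) ≤ (1 + R) ^ m := Real.one_le_rpow (by linarith) (le_of_lt hm)
  have hRm0 : (0:ℝ) ≤ (1 + R) ^ m := by linarith
  have hP1 : |1 + Pv| ≤ (1 + C) * (1 + R) ^ m := by
    have h1 : (1 + ‖v‖) ^ m ≤ (1 + R) ^ m :=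
      Real.rpow_le_rpow (by positivity) (by linarith) (le_of_lt hm)
    have h3 : |1 + Pv| ≤ 1 + |Pv| := by
      calc |1 + Pv| ≤ |(1:ℝ)| + |Pv| := abs_add_le _ _
      _ = 1 + |Pv| := by rw [abs_one]
    nlinarith [abs_nonneg Pv]
  have hd₁ : ‖v - u₁‖ ≤ R + Chat := by have := norm_sub_le v u₁; linarith
  have hd₂ : ‖v - u₂‖ ≤ R + Chat := by have := norm_sub_le v u₂; linarith
  have hdu : |‖v - u₁‖ - ‖v - u₂‖| ≤ ‖u₁ - u₂‖ := by
    have h := abs_norm_sub_norm_le (v - u₁) (v - u₂)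
    have h2 : v - u₁ - (v - u₂) = u₂ - u₁ := by abel
    rw [h2] at h
    rwa [norm_sub_rev u₂ u₁] at h
  have hEdiff : |E₁ - E₂| ≤ (R + Chat) * ‖u₁ - u₂‖ := by
    have h0 := exp_lip (a := ‖v - u₁‖ ^ 2 / 2) (b := ‖v - u₂‖ ^ 2 / 2)
      (by positivity) (by positivity)
    have hs1 : -(‖v - u₁‖ ^ 2 / 2) = -‖v - u₁‖ ^ 2 / 2 := by ring
    have hs2 : -(‖v - u₂‖ ^ 2 / 2) = -‖v - u₂‖ ^ 2 / 2 := by ring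
    rw [hs1, hs2, ← hE₁, ← hE₂] at h0
    have h5 : ‖v - u₁‖ ^ 2 / 2 - ‖v - u₂‖ ^ 2 / 2
        = (‖v - u₁‖ - ‖v - u₂‖) * ((‖v - u₁‖ + ‖v - u₂‖) / 2) := by ring
    refine h0.trans ?_
    rw [h5, abs_mul,
      abs_of_nonneg (show (0:ℝ) ≤ (‖v - u₁‖ + ‖v - u₂‖) / 2 by positivity)]
    have h6 : (‖v - u₁‖ + ‖v - u₂‖) / 2 ≤ R + Chat := by linarith
    calc |‖v - u₁‖ - ‖v - u₂‖| * ((‖v - u₁‖ + ‖v - u₂‖) / 2)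
        ≤ ‖u₁ - u₂‖ * (R + Chat) := mul_le_mul hdu h6 (by positivity) (norm_nonneg _)
    _ = (R + Chat) * ‖u₁ - u₂‖ := mul_comm _ _
  have key : c₀ * ρ₁ * (1 + Pv) * E₁ - c₀ * ρ₂ * (1 + Pv) * E₂
      = c₀ * ((1 + Pv) * ((ρ₁ - ρ₂) * E₁ + ρ₂ * (E₁ - E₂))) := by ring
  rw [key, abs_mul, abs_mul, abs_of_nonneg hc₀0]
  have hinner : |(ρ₁ - ρ₂) * E₁ + ρ₂ * (E₁ - E₂)|
      ≤ |ρ₁ - ρ₂| + Chat * ((R + Chat) * ‖u₁ - u₂‖) := by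
    calc |(ρ₁ - ρ₂) * E₁ + ρ₂ * (E₁ - E₂)| ≤ |(ρ₁ - ρ₂) * E₁| + |ρ₂ * (E₁ - E₂)| :=
          abs_add_le _ _
    _ = |ρ₁ - ρ₂| * E₁ + ρ₂ * |E₁ - E₂| := by
          rw [abs_mul, abs_mul, abs_of_nonneg hE₁0, abs_of_nonneg hρ₂0]
    _ ≤ |ρ₁ - ρ₂| * 1 + Chat * ((R + Chat) * ‖u₁ - u₂‖) := by
          gcongr
    _ = |ρ₁ - ρ₂| + Chat * ((R + Chat) * ‖u₁ - u₂‖) := by ring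
  calc c₀ * (|1 + Pv| * |(ρ₁ - ρ₂) * E₁ + ρ₂ * (E₁ - E₂)|)
      ≤ 1 * (((1 + C) * (1 + R) ^ m) * (|ρ₁ - ρ₂| + Chat * ((R + Chat) * ‖u₁ - u₂‖))) := by
        gcongr
  _ = (1 + C) * (1 + R) ^ m * |ρ₁ - ρ₂|
        + (1 + C) * (1 + R) ^ m * (Chat * (R + Chat)) * ‖u₁ - u₂‖ := by ring

set_option maxHeartbeats 1000000 in
/-- Core uniform translation-continuity estimate. -/
lemma core {E : Type*} [NormedAddCommGroup E] [NormedSpace ℝ E] [MeasurableSpace E] [BorelSpace E]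
    [SecondCountableTopology E]
    {f : R3 → E} (hfm : Measurable f)
    {p : ℝ} (hp : 1 ≤ p) (hLp : MemLp f (ENNReal.ofReal p) volume)
    {t₁ T R ε : ℝ} (ht₁ : 0 < t₁) (hR : 0 < R) (hε : 0 < ε) :
    ∃ χ : ℝ, 0 < χ ∧ χ ≤ t₁ / 2 ∧ ∀ σ : ℝ, ∀ δ : R3, |σ| + ‖δ‖ ≤ χ →
      ∀ x : R3, ∀ t : ℝ, t ∈ Icc t₁ T →
        ∫ v in Metric.ball (0:R3) R, ‖f (x + δ - (t + σ) • v) - f (x - t • v)‖ ≤ ε := by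
  have hp0 : 0 < p := lt_of_lt_of_le one_pos hp
  set q : ℝ≥0∞ := ENNReal.ofReal p with hq
  have hq1 : 1 ≤ q := by
    rw [hq, ← ENNReal.ofReal_one]
    exact ENNReal.ofReal_le_ofReal hp
  have hq0 : q ≠ 0 := by
    rw [hq]
    simpa using hp0
  have hqtop : q ≠ ⊤ := ENNReal.ofReal_ne_top
  have hqtr : q.toReal = p := ENNReal.toReal_ofReal hp0.le
  -- the fixed finite constant D
  set B : Set R3 := Metric.ball (0:R3) R with hB
  have hBvol_top : volume B ≠ ⊤ := (measure_ball_lt_top).ne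
  have hBvol_pos : 0 < volume B := Metric.measure_ball_pos _ _ hR
  set D : ℝ≥0∞ := ((ENNReal.ofReal ((t₁ / 2) ^ 3))⁻¹) ^ (1 / p)
      * (volume B) ^ (1 - 1 / p) with hD
  have ht₁8 : (0:ℝ) < (t₁ / 2) ^ 3 := by positivity
  have hDtop : D ≠ ⊤ := by
    apply ENNReal.mul_ne_top
    · exact ENNReal.rpow_ne_top_of_nonneg (by positivity)
        (ENNReal.inv_ne_top.2 (by simpa using ht₁8))
    · exact ENNReal.rpow_ne_top_of_nonneg (by
        have : 1 / p ≤ 1 := by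
          rw [div_le_one hp0]; exact hp
        linarith) hBvol_top
  have hD0 : D ≠ 0 := by
    apply mul_ne_zero
    · exact (ENNReal.rpow_pos (ENNReal.inv_pos.2 ENNReal.ofReal_ne_top) (by
        exact ENNReal.inv_ne_top.2 (by simpa using ht₁8))).ne'
    · exact (ENNReal.rpow_pos hBvol_pos hBvol_top).ne'
  set ε₃ : ℝ≥0∞ := ENNReal.ofReal (ε / 3) with hε₃
  have hε₃0 : ε₃ ≠ 0 := by
    rw [hε₃]
    simpa using by positivity
  set εE : ℝ≥0∞ := ε₃ / D with hεE
  have hεE0 : εE ≠ 0 := (ENNReal.div_pos hε₃0 hDtop).ne'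
  obtain ⟨fc, fc_supp, fc_close, fc_cont, _⟩ :=
    hLp.exists_hasCompactSupport_eLpNorm_sub_le hqtop hεE0
  have fc_meas : Measurable fc := fc_cont.measurable
  have hUC : UniformContinuous fc := fc_supp.uniformContinuous_of_continuous fc_cont
  set Vol : ℝ := (volume B).toReal with hVol
  have hVol0 : 0 ≤ Vol := ENNReal.toReal_nonneg
  have hε''0 : 0 < ε / 3 / (Vol + 1) := by positivity
  obtain ⟨θ, hθ0, hθ⟩ := Metric.uniformContinuous_iff.1 hUC (ε / 3 / (Vol + 1)) hε''0
  refine ⟨min (t₁ / 2) (θ / (R + 2)), by positivity, min_le_left _ _, ?_⟩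
  intro σ δ hσδ x t ht
  have hσ : |σ| ≤ min (t₁ / 2) (θ / (R + 2)) :=
    le_trans (le_add_of_nonneg_right (norm_nonneg δ)) hσδ
  have hδn : ‖δ‖ ≤ min (t₁ / 2) (θ / (R + 2)) :=
    le_trans (le_add_of_nonneg_left (abs_nonneg σ)) hσδ
  have hσ2 : |σ| ≤ t₁ / 2 := hσ.trans (min_le_left _ _)
  have hs₁ : t₁ / 2 ≤ t + σ := by
    have := neg_abs_le σ
    have := ht.1
    linarith
  have ht' : t₁ / 2 ≤ t := by have := ht.1; linarith
  -- approximation term estimate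
  have hT1 : ∀ (a : R3) (s : ℝ), t₁ / 2 ≤ s →
      ∫⁻ v in B, (‖f (a - s • v) - fc (a - s • v)‖₊ : ℝ≥0∞) ≤ ε₃ := by
    intro a s hs
    have hs0 : 0 < s := lt_of_lt_of_le (by positivity) hs
    have hA : Measurable (fun v : R3 => a - s • v) :=
      measurable_const.sub (measurable_id.const_smul s)
    have hgm : Measurable (f - fc) := hfm.sub fc_meas
    have e1 : ∫⁻ v in B, (‖f (a - s • v) - fc (a - s • v)‖₊ : ℝ≥0∞)
        = eLpNorm ((f - fc) ∘ (fun v : R3 => a - s • v)) 1 (volume.restrict B) := by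
      rw [eLpNorm_one_eq_lintegral_enorm]; rfl
    have heq : (1 / (1 : ℝ≥0∞).toReal - 1 / q.toReal) = 1 - 1 / p := by
      simp [hqtr]
    have hc0 : (ENNReal.ofReal (s ^ 3))⁻¹ ≠ 0 := ENNReal.inv_ne_zero.2 ENNReal.ofReal_ne_top
    have hscale : eLpNorm ((f - fc) ∘ (fun v : R3 => a - s • v)) q volume
        ≤ ((ENNReal.ofReal ((t₁ / 2) ^ 3))⁻¹) ^ (1 / p) * εE := by
      rw [← eLpNorm_map_measure (hgm.stronglyMeasurable.aestronglyMeasurable) hA.aemeasurable,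
        map_affine a hs0, eLpNorm_smul_measure_of_ne_zero hc0, smul_eq_mul]
      have h2 : ((1:ℝ≥0∞) / q).toReal = 1 / p := by
        rw [ENNReal.toReal_div, ENNReal.toReal_one, hqtr]
      rw [h2]
      have h3 : ((ENNReal.ofReal (s ^ 3))⁻¹) ^ (1 / p)
          ≤ ((ENNReal.ofReal ((t₁ / 2) ^ 3))⁻¹) ^ (1 / p) := by
        apply ENNReal.rpow_le_rpow _ (by positivity)
        exact ENNReal.inv_le_inv.2 (ENNReal.ofReal_le_ofReal (pow_le_pow_left₀ (by positivity) hs 3))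
      exact mul_le_mul' h3 fc_close
    calc ∫⁻ v in B, (‖f (a - s • v) - fc (a - s • v)‖₊ : ℝ≥0∞)
        = eLpNorm ((f - fc) ∘ (fun v : R3 => a - s • v)) 1 (volume.restrict B) := e1
      _ ≤ eLpNorm ((f - fc) ∘ (fun v : R3 => a - s • v)) q (volume.restrict B)
            * (volume.restrict B univ) ^ (1 / (1 : ℝ≥0∞).toReal - 1 / q.toReal) :=
          eLpNorm_le_eLpNorm_mul_rpow_measure_univ hq1
            ((hgm.comp hA).stronglyMeasurable.aestronglyMeasurable)
      _ = eLpNorm ((f - fc) ∘ (fun v : R3 => a - s • v)) q (volume.restrict B)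
            * (volume B) ^ (1 - 1 / p) := by
          rw [Measure.restrict_apply_univ, heq]
      _ ≤ (((ENNReal.ofReal ((t₁ / 2) ^ 3))⁻¹) ^ (1 / p) * εE) * (volume B) ^ (1 - 1 / p) := by
          gcongr
          exact (eLpNorm_mono_measure _ Measure.restrict_le_self).trans hscale
      _ = D * εE := by rw [hD]; ring
      _ = ε₃ := ENNReal.mul_div_cancel hD0 hDtop
  -- continuity term estimate
  have hT2 : ∫⁻ v in B, (‖fc (x + δ - (t + σ) • v) - fc (x - t • v)‖₊ : ℝ≥0∞) ≤ ε₃ := by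
    have hpt : ∀ v ∈ B, (‖fc (x + δ - (t + σ) • v) - fc (x - t • v)‖₊ : ℝ≥0∞)
        ≤ ENNReal.ofReal (ε / 3 / (Vol + 1)) := by
      intro v hv
      have hvR : ‖v‖ < R := by
        rw [hB] at hv
        simpa [dist_zero_right] using Metric.mem_ball.1 hv
      have hχθ : min (t₁ / 2) (θ / (R + 2)) ≤ θ / (R + 2) := min_le_right _ _
      have hdist : dist (x + δ - (t + σ) • v) (x - t • v) < θ := by
        rw [dist_eq_norm]
        have hrw : (x + δ - (t + σ) • v) - (x - t • v) = δ - σ • v := by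
          rw [add_smul]; abel
        rw [hrw]
        have h1 : ‖δ - σ • v‖ ≤ ‖δ‖ + |σ| * ‖v‖ := by
          calc ‖δ - σ • v‖ ≤ ‖δ‖ + ‖σ • v‖ := norm_sub_le _ _
          _ = ‖δ‖ + |σ| * ‖v‖ := by rw [norm_smul, Real.norm_eq_abs]
        have h2 : ‖δ‖ + |σ| * ‖v‖ ≤ (θ / (R + 2)) * (R + 1) := by
          have hδθ : ‖δ‖ ≤ θ / (R + 2) := hδn.trans hχθ
          have hσθ : |σ| ≤ θ / (R + 2) := hσ.trans hχθ
          nlinarith [abs_nonneg σ, norm_nonneg v, norm_nonneg δ]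
        have h3 : (θ / (R + 2)) * (R + 1) < θ := by
          rw [div_mul_eq_mul_div, div_lt_iff₀ (by linarith)]
          nlinarith
        linarith
      have hfc := hθ hdist
      rw [← enorm_eq_nnnorm, ← ofReal_norm]
      apply ENNReal.ofReal_le_ofReal
      rw [← dist_eq_norm]
      exact hfc.le
    calc ∫⁻ v in B, (‖fc (x + δ - (t + σ) • v) - fc (x - t • v)‖₊ : ℝ≥0∞)
        ≤ ∫⁻ _v in B, ENNReal.ofReal (ε / 3 / (Vol + 1)) ∂volume :=
          setLIntegral_mono' measurableSet_ball hpt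
      _ = ENNReal.ofReal (ε / 3 / (Vol + 1)) * volume B := setLIntegral_const _ _
      _ = ENNReal.ofReal (ε / 3 / (Vol + 1)) * ENNReal.ofReal Vol := by
          rw [hVol, ENNReal.ofReal_toReal hBvol_top]
      _ = ENNReal.ofReal (ε / 3 / (Vol + 1) * Vol) := (ENNReal.ofReal_mul hε''0.le).symm
      _ ≤ ε₃ := by
          rw [hε₃]
          apply ENNReal.ofReal_le_ofReal
          rw [div_mul_eq_mul_div, div_le_iff₀ (by linarith)]
          nlinarith
  -- combine
  have hptw : ∀ v : R3, (‖f (x + δ - (t + σ) • v) - f (x - t • v)‖₊ : ℝ≥0∞)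
      ≤ (‖f (x + δ - (t + σ) • v) - fc (x + δ - (t + σ) • v)‖₊ : ℝ≥0∞)
        + ((‖fc (x + δ - (t + σ) • v) - fc (x - t • v)‖₊ : ℝ≥0∞)
          + (‖f (x - t • v) - fc (x - t • v)‖₊ : ℝ≥0∞)) := by
    intro v
    set a1 := f (x + δ - (t + σ) • v)
    set a2 := f (x - t • v)
    set b1 := fc (x + δ - (t + σ) • v)
    set b2 := fc (x - t • v)
    have hre : ‖a1 - a2‖ ≤ ‖a1 - b1‖ + (‖b1 - b2‖ + ‖a2 - b2‖) := by
      calc ‖a1 - a2‖ = ‖(a1 - b1) + ((b1 - b2) + (b2 - a2))‖ := by congr 1; abel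
      _ ≤ ‖a1 - b1‖ + ‖(b1 - b2) + (b2 - a2)‖ := norm_add_le _ _
      _ ≤ ‖a1 - b1‖ + (‖b1 - b2‖ + ‖b2 - a2‖) := by
          gcongr
          exact norm_add_le _ _
      _ = ‖a1 - b1‖ + (‖b1 - b2‖ + ‖a2 - b2‖) := by rw [norm_sub_rev b2 a2]
    simp only [← enorm_eq_nnnorm, ← ofReal_norm]
    rw [← ENNReal.ofReal_add (norm_nonneg _) (norm_nonneg _),
      ← ENNReal.ofReal_add (norm_nonneg _) (by positivity)]
    exact ENNReal.ofReal_le_ofReal hre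
  have hAm : Measurable (fun v : R3 => x + δ - (t + σ) • v) :=
    measurable_const.sub (measurable_id.const_smul (t + σ))
  have hBm : Measurable (fun v : R3 => x - t • v) :=
    measurable_const.sub (measurable_id.const_smul t)
  have hm1 : Measurable (fun v : R3 =>
      (‖f (x + δ - (t + σ) • v) - fc (x + δ - (t + σ) • v)‖₊ : ℝ≥0∞)) :=
    ((hfm.comp hAm).sub (fc_meas.comp hAm)).enorm
  have hm2 : Measurable (fun v : R3 =>
      (‖fc (x + δ - (t + σ) • v) - fc (x - t • v)‖₊ : ℝ≥0∞)) :=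
    ((fc_meas.comp hAm).sub (fc_meas.comp hBm)).enorm
  have hlin : ∫⁻ v in B, (‖f (x + δ - (t + σ) • v) - f (x - t • v)‖₊ : ℝ≥0∞)
      ≤ ENNReal.ofReal ε := by
    have hsum : ε₃ + (ε₃ + ε₃) = ENNReal.ofReal ε := by
      rw [hε₃, ← ENNReal.ofReal_add (by positivity) (by positivity),
        ← ENNReal.ofReal_add (by positivity) (by positivity)]
      congr 1
      ring
    calc ∫⁻ v in B, (‖f (x + δ - (t + σ) • v) - f (x - t • v)‖₊ : ℝ≥0∞)
        ≤ ∫⁻ v in B, ((‖f (x + δ - (t + σ) • v) - fc (x + δ - (t + σ) • v)‖₊ : ℝ≥0∞)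
            + ((‖fc (x + δ - (t + σ) • v) - fc (x - t • v)‖₊ : ℝ≥0∞)
              + (‖f (x - t • v) - fc (x - t • v)‖₊ : ℝ≥0∞))) :=
          lintegral_mono fun v => hptw v
      _ = (∫⁻ v in B, (‖f (x + δ - (t + σ) • v) - fc (x + δ - (t + σ) • v)‖₊ : ℝ≥0∞))
            + ∫⁻ v in B, ((‖fc (x + δ - (t + σ) • v) - fc (x - t • v)‖₊ : ℝ≥0∞)
              + (‖f (x - t • v) - fc (x - t • v)‖₊ : ℝ≥0∞)) :=
          lintegral_add_left hm1 _
      _ = (∫⁻ v in B, (‖f (x + δ - (t + σ) • v) - fc (x + δ - (t + σ) • v)‖₊ : ℝ≥0∞))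
            + ((∫⁻ v in B, (‖fc (x + δ - (t + σ) • v) - fc (x - t • v)‖₊ : ℝ≥0∞))
              + ∫⁻ v in B, (‖f (x - t • v) - fc (x - t • v)‖₊ : ℝ≥0∞)) := by
          rw [lintegral_add_left hm2]
      _ ≤ ε₃ + (ε₃ + ε₃) := by
          gcongr <;>
            first
              | exact hT1 (x + δ) (t + σ) hs₁
              | exact hT2
              | exact hT1 x t ht'
      _ = ENNReal.ofReal ε := hsum
  exact int_norm_le (((hfm.comp hAm).sub (hfm.comp hBm)).stronglyMeasurable.aestronglyMeasurable)
    hε.le hlin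

end NVAux

open NVAux in
/-- A near-vacuum initial datum (1.8-1) satisfies condition (1.5-2) (uniformly on strips
`ℝ³×[t₁,T]`) and, in particular, the second part of condition (1.5) at every fixed
`(x,t)` with `t > 0`. -/
theorem near_vacuum_data_conditions
    (ρ₀ : R3 → ℝ) (u₀ : R3 → R3) (P : R3 → ℝ) (Chat C m p : ℝ)
    (F₀ : R3 → R3 → ℝ)
    (hChat : 1 ≤ Chat) (hC : 0 < C) (hm : 0 < m) (hp : 1 ≤ p)
    (hρmeas : Measurable ρ₀) (humeas : Measurable u₀) (hPmeas : Measurable P)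
    (hρbd : ∀ x : R3, 0 ≤ ρ₀ x ∧ ρ₀ x ≤ Chat)
    (hubd : ∀ x : R3, ‖u₀ x‖ ≤ Chat)
    (hP : ∀ v : R3, |P v| ≤ C * (1 + ‖v‖) ^ m)
    (hρLp : MemLp ρ₀ (ENNReal.ofReal p) volume)
    (huLp : MemLp u₀ (ENNReal.ofReal p) volume)
    (hF₀ : ∀ x v : R3, F₀ x v =
      (2 * π) ^ (-(3:ℝ)/2) * ρ₀ x * (1 + P v) * Real.exp (-‖v - u₀ x‖ ^ 2 / 2)) :
    (∀ t₁ T : ℝ, 0 < t₁ → t₁ < T → ∀ ε : ℝ, 0 < ε →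
      ∃ χ : ℝ, 0 < χ ∧ ∀ σ : ℝ, ∀ δ : R3, |σ| + ‖δ‖ ≤ χ →
        ∀ x : R3, ∀ t : ℝ, t ∈ Icc t₁ T →
          (∫ v : R3, |F₀ (x + δ - (t + σ) • v) v - F₀ (x - t • v) v|) ≤ ε) ∧
    (∀ x : R3, ∀ t : ℝ, 0 < t →
      Tendsto (fun sd : ℝ × R3 =>
          ∫ v : R3, |F₀ (x + sd.2 - (t + sd.1) • v) v - F₀ (x - t • v) v|)
        (nhds (0, 0)) (nhds 0)) := by
  have hChat0 : (0:ℝ) < Chat := lt_of_lt_of_le one_pos hChat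
  -- measurability of the basic building block
  have hmF : ∀ (a : R3) (s : ℝ), Measurable (fun v : R3 => F₀ (a - s • v) v) := by
    intro a s
    have h1 : Measurable (fun v : R3 => a - s • v) :=
      measurable_const.sub (measurable_id.const_smul s)
    have h2 : (fun v : R3 => F₀ (a - s • v) v) = fun v : R3 =>
        (2 * π) ^ (-(3:ℝ)/2) * ρ₀ (a - s • v) * (1 + P v)
          * Real.exp (-‖v - u₀ (a - s • v)‖ ^ 2 / 2) := funext fun v => hF₀ _ _
    rw [h2]
    exact ((measurable_const.mul (hρmeas.comp h1)).mul (measurable_const.add hPmeas)).mul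
      (Real.measurable_exp.comp
        ((((measurable_id.sub (humeas.comp h1)).norm).pow_const 2).neg.div_const 2))
  -- global Gaussian bound
  have hFb : ∀ y v : R3, |F₀ y v| ≤ (Chat * (1 + C) * Real.exp ((m + Chat) ^ 2))
      * Real.exp (-(4⁻¹:ℝ) * ‖v‖ ^ 2) := by
    intro y v
    rw [hF₀]
    have h := F_bound hC hm hChat (hρbd y).1 (hρbd y).2 (hubd y) (hP v)
    calc |(2 * π) ^ (-(3:ℝ)/2) * ρ₀ y * (1 + P v) * Real.exp (-‖v - u₀ y‖ ^ 2 / 2)|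
        ≤ Chat * (1 + C) * Real.exp ((m + Chat) ^ 2) * Real.exp (-(4⁻¹:ℝ) * ‖v‖ ^ 2) := h
      _ = (Chat * (1 + C) * Real.exp ((m + Chat) ^ 2)) * Real.exp (-(4⁻¹:ℝ) * ‖v‖ ^ 2) := by
          ring
  set K : ℝ := Chat * (1 + C) * Real.exp ((m + Chat) ^ 2) with hKdef
  have hK0 : 0 < K := by positivity
  have hmain : ∀ t₁ T : ℝ, 0 < t₁ → t₁ < T → ∀ ε : ℝ, 0 < ε →
      ∃ χ : ℝ, 0 < χ ∧ ∀ σ : ℝ, ∀ δ : R3, |σ| + ‖δ‖ ≤ χ →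
        ∀ x : R3, ∀ t : ℝ, t ∈ Icc t₁ T →
          (∫ v : R3, |F₀ (x + δ - (t + σ) • v) v - F₀ (x - t • v) v|) ≤ ε := by
    intro t₁ T ht₁ htT ε hε
    obtain ⟨R, hR1, hRtail⟩ := tail gauss_int (fun v => (Real.exp_pos _).le)
      (show (0:ℝ) < ε / (4 * (K + 1)) by positivity)
    have hR0 : (0:ℝ) < R := lt_of_lt_of_le one_pos hR1
    set L₁ : ℝ := (1 + C) * (1 + R) ^ m with hL₁def
    have hL₁0 : 0 < L₁ := by
      have : (0:ℝ) < (1 + R) ^ m := Real.rpow_pos_of_pos (by linarith) m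
      positivity
    set L₂ : ℝ := L₁ * (Chat * (R + Chat)) with hL₂def
    have hL₂0 : 0 < L₂ := by positivity
    obtain ⟨χ₁, hχ₁0, hχ₁half, hcore₁⟩ := core (E := ℝ) hρmeas hp hρLp (T := T) ht₁ hR0
      (show (0:ℝ) < ε / (4 * (L₁ + 1)) by positivity)
    obtain ⟨χ₂, hχ₂0, hχ₂half, hcore₂⟩ := core (E := R3) humeas hp huLp (T := T) ht₁ hR0
      (show (0:ℝ) < ε / (4 * (L₂ + 1)) by positivity)
    refine ⟨min χ₁ χ₂, lt_min hχ₁0 hχ₂0, ?_⟩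
    intro σ δ hσδ x t ht
    have hAm : Measurable (fun v : R3 => x + δ - (t + σ) • v) :=
      measurable_const.sub (measurable_id.const_smul (t + σ))
    have hBm : Measurable (fun v : R3 => x - t • v) :=
      measurable_const.sub (measurable_id.const_smul t)
    have hdm : Measurable (fun v : R3 =>
        F₀ (x + δ - (t + σ) • v) v - F₀ (x - t • v) v) :=
      (hmF (x + δ) (t + σ)).sub (hmF x t)
    have hbnd : ∀ v : R3, |F₀ (x + δ - (t + σ) • v) v - F₀ (x - t • v) v|
        ≤ 2 * K * Real.exp (-(4⁻¹:ℝ) * ‖v‖ ^ 2) := by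
      intro v
      have h1 := hFb (x + δ - (t + σ) • v) v
      have h2 := hFb (x - t • v) v
      have h3 : |F₀ (x + δ - (t + σ) • v) v - F₀ (x - t • v) v|
          ≤ |F₀ (x + δ - (t + σ) • v) v| + |F₀ (x - t • v) v| := abs_sub _ _
      linarith
    have hInt : Integrable (fun v : R3 =>
        |F₀ (x + δ - (t + σ) • v) v - F₀ (x - t • v) v|) volume := by
      refine Integrable.mono' (gauss_int.const_mul (2 * K)) hdm.abs.aestronglyMeasurable
        (ae_of_all _ fun v => ?_)
      rw [Real.norm_eq_abs, abs_abs]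
      exact hbnd v
    -- estimate outside the ball
    have hcompl : ∫ v in (Metric.ball (0:R3) R)ᶜ,
        |F₀ (x + δ - (t + σ) • v) v - F₀ (x - t • v) v| ≤ ε / 2 := by
      calc ∫ v in (Metric.ball (0:R3) R)ᶜ,
            |F₀ (x + δ - (t + σ) • v) v - F₀ (x - t • v) v|
          ≤ ∫ v in (Metric.ball (0:R3) R)ᶜ, 2 * K * Real.exp (-(4⁻¹:ℝ) * ‖v‖ ^ 2) :=
            setIntegral_mono_on hInt.integrableOn
              ((gauss_int.const_mul (2 * K)).integrableOn)
              measurableSet_ball.compl (fun v _ => hbnd v)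
        _ = 2 * K * ∫ v in (Metric.ball (0:R3) R)ᶜ, Real.exp (-(4⁻¹:ℝ) * ‖v‖ ^ 2) :=
            integral_const_mul _ _
        _ ≤ 2 * K * (ε / (4 * (K + 1))) := by
            apply mul_le_mul_of_nonneg_left hRtail (by positivity)
        _ ≤ ε / 2 := by
            rw [mul_comm, div_mul_eq_mul_div, div_le_div_iff₀ (by positivity) (by norm_num)]
            nlinarith
    -- estimate inside the ball
    have h₁ := hcore₁ σ δ (hσδ.trans (min_le_left _ _)) x t ht
    have h₂ := hcore₂ σ δ (hσδ.trans (min_le_right _ _)) x t ht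
    simp only [Real.norm_eq_abs] at h₁
    have hm₁ : Measurable (fun v : R3 => |ρ₀ (x + δ - (t + σ) • v) - ρ₀ (x - t • v)|) :=
      ((hρmeas.comp hAm).sub (hρmeas.comp hBm)).abs
    have hm₂ : Measurable (fun v : R3 => ‖u₀ (x + δ - (t + σ) • v) - u₀ (x - t • v)‖) :=
      ((humeas.comp hAm).sub (humeas.comp hBm)).norm
    have hIball1 : IntegrableOn (fun v : R3 =>
        |ρ₀ (x + δ - (t + σ) • v) - ρ₀ (x - t • v)|) (Metric.ball (0:R3) R) volume := by
      refine Integrable.mono' (integrableOn_const (C := (2 * Chat : ℝ)) measure_ball_lt_top.ne)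
        hm₁.aestronglyMeasurable (ae_of_all _ fun v => ?_)
      rw [Real.norm_eq_abs, abs_abs]
      have ha := hρbd (x + δ - (t + σ) • v)
      have hb := hρbd (x - t • v)
      have := abs_sub (ρ₀ (x + δ - (t + σ) • v)) (ρ₀ (x - t • v))
      have h5 : |ρ₀ (x + δ - (t + σ) • v)| ≤ Chat := abs_le.2 ⟨by linarith [ha.1], ha.2⟩
      have h6 : |ρ₀ (x - t • v)| ≤ Chat := abs_le.2 ⟨by linarith [hb.1], hb.2⟩
      calc |ρ₀ (x + δ - (t + σ) • v) - ρ₀ (x - t • v)| ≤ _ + _ := abs_sub _ _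
        _ ≤ Chat + Chat := add_le_add h5 h6
        _ = (2 * Chat : ℝ) := by ring
    have hIball2 : IntegrableOn (fun v : R3 =>
        ‖u₀ (x + δ - (t + σ) • v) - u₀ (x - t • v)‖) (Metric.ball (0:R3) R) volume := by
      refine Integrable.mono' (integrableOn_const (C := (2 * Chat : ℝ)) measure_ball_lt_top.ne)
        hm₂.aestronglyMeasurable (ae_of_all _ fun v => ?_)
      rw [norm_norm]
      calc ‖u₀ (x + δ - (t + σ) • v) - u₀ (x - t • v)‖
          ≤ ‖u₀ (x + δ - (t + σ) • v)‖ + ‖u₀ (x - t • v)‖ := norm_sub_le _ _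
        _ ≤ Chat + Chat := add_le_add (hubd _) (hubd _)
        _ = (2 * Chat : ℝ) := by ring
    have hball : ∫ v in Metric.ball (0:R3) R,
        |F₀ (x + δ - (t + σ) • v) v - F₀ (x - t • v) v| ≤ ε / 2 := by
      have harith : ∀ L : ℝ, 0 < L → L * (ε / (4 * (L + 1))) ≤ ε / 4 := by
        intro L hL
        rw [mul_comm, div_mul_eq_mul_div, div_le_div_iff₀ (by positivity) (by norm_num)]
        nlinarith
      calc ∫ v in Metric.ball (0:R3) R,
            |F₀ (x + δ - (t + σ) • v) v - F₀ (x - t • v) v|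
          ≤ ∫ v in Metric.ball (0:R3) R,
              (L₁ * |ρ₀ (x + δ - (t + σ) • v) - ρ₀ (x - t • v)|
                + L₂ * ‖u₀ (x + δ - (t + σ) • v) - u₀ (x - t • v)‖) := by
            refine setIntegral_mono_on hInt.integrableOn
              ((hIball1.const_mul L₁).add (hIball2.const_mul L₂)) measurableSet_ball
              (fun v hv => ?_)
            rw [hF₀, hF₀]
            have hvR : ‖v‖ ≤ R := (mem_ball_zero_iff.1 hv).le
            exact F_lip hC hm hChat hR0 (hρbd _).1 (hρbd _).1 (hρbd _).2 (hubd _) (hubd _)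
              (hP v) hvR
        _ = L₁ * (∫ v in Metric.ball (0:R3) R,
              |ρ₀ (x + δ - (t + σ) • v) - ρ₀ (x - t • v)|)
            + L₂ * ∫ v in Metric.ball (0:R3) R,
              ‖u₀ (x + δ - (t + σ) • v) - u₀ (x - t • v)‖ := by
            rw [integral_add (hIball1.const_mul L₁) (hIball2.const_mul L₂),
              integral_const_mul, integral_const_mul]
        _ ≤ L₁ * (ε / (4 * (L₁ + 1))) + L₂ * (ε / (4 * (L₂ + 1))) :=
            add_le_add (mul_le_mul_of_nonneg_left h₁ hL₁0.le)
              (mul_le_mul_of_nonneg_left h₂ hL₂0.le)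
        _ ≤ ε / 4 + ε / 4 := add_le_add (harith L₁ hL₁0) (harith L₂ hL₂0)
        _ = ε / 2 := by ring
    rw [← integral_add_compl (measurableSet_ball (x := (0:R3)) (ε := R)) hInt]
    linarith
  refine ⟨hmain, ?_⟩
  intro x t ht
  rw [Metric.tendsto_nhds]
  intro ε hε
  obtain ⟨χ, hχ0, hχ⟩ := hmain (t / 2) (t + 1) (by linarith) (by linarith) (ε / 2)
    (by positivity)
  have hopen : IsOpen {sd : ℝ × R3 | |sd.1| + ‖sd.2‖ < χ} :=
    isOpen_lt ((continuous_abs.comp continuous_fst).add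
      (continuous_norm.comp continuous_snd)) continuous_const
  have hmem : ((0:ℝ), (0:R3)) ∈ {sd : ℝ × R3 | |sd.1| + ‖sd.2‖ < χ} := by
    simp [hχ0]
  filter_upwards [hopen.mem_nhds hmem] with sd hsd
  have hnn : 0 ≤ ∫ v : R3, |F₀ (x + sd.2 - (t + sd.1) • v) v - F₀ (x - t • v) v| :=
    integral_nonneg fun v => abs_nonneg _
  have hle := hχ sd.1 sd.2 (le_of_lt hsd) x t ⟨by linarith, by linarith⟩
  rw [dist_zero_right, Real.norm_eq_abs, abs_of_nonneg hnn]
  linarith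
end
end
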